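/- arXiv:1412.3962 — 4 statements merged into one kernel-verified Lean document; each statement's English description precedes it below -/
import Mathlib

section
/- A monomial ideal I in S = k[x_1,...,x_n] is of Borel type (i.e., I : (x_1,...,x_i)^∞ = I : x_i^∞ for all i) if and only if the truncated ideal I_{≥e} (the ideal generated by all monomials of degree at least e belonging to I) is stable for all sufficiently large e. -/
open MvPolynomial DirectSum

noncomputable section




variable {k : Type} [Field k] {n : ℕ}

/-- The maximal graded ideal `(x_1, …, x_n)` of `k[x_1,…,x_n]`. -/
def maxIdeal (k : Type) [Field k] (n : ℕ) : Ideal (MvPolynomial (Fin n) k) :=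
  Ideal.span (Set.range X)

/-- The "infinite colon" `I : J^∞ = ⋃_t (I : J^t)`. -/
def infColon (I J : Ideal (MvPolynomial (Fin n) k)) : Ideal (MvPolynomial (Fin n) k) :=
  ⨆ t : ℕ, Submodule.colon I ((J ^ t : Ideal (MvPolynomial (Fin n) k)) : Set (MvPolynomial (Fin n) k))

/-- The saturation `I^{sat} = I : m^∞`. -/
def satur (I : Ideal (MvPolynomial (Fin n) k)) : Ideal (MvPolynomial (Fin n) k) :=
  infColon I (maxIdeal k n)

/-- A monomial ideal: an ideal generated by monomials. -/
def IsMonomialIdeal (I : Ideal (MvPolynomial (Fin n) k)) : Prop :=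
  ∃ A : Set (Fin n →₀ ℕ), I = Ideal.span ((fun u => monomial u (1 : k)) '' A)

/-- `I` is of Borel type: `I : (x_1,…,x_i)^∞ = I : x_i^∞` for all `i`. -/
def IsBorelType (I : Ideal (MvPolynomial (Fin n) k)) : Prop :=
  ∀ i : Fin n,
    infColon I (Ideal.span {f | ∃ j ≤ i, f = X j}) = infColon I (Ideal.span {X i})

/-- Total degree of an exponent vector. -/
def expDeg (u : Fin n →₀ ℕ) : ℕ := u.sum fun _ e => e

/-- The truncated ideal `I_{≥ e}`, generated by all monomials of degree `≥ e` lying in `I`. -/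
def truncGE (I : Ideal (MvPolynomial (Fin n) k)) (e : ℕ) : Ideal (MvPolynomial (Fin n) k) :=
  Ideal.span {f | ∃ u : Fin n →₀ ℕ, monomial u (1 : k) ∈ I ∧ e ≤ expDeg u ∧ f = monomial u (1 : k)}

/-- A stable monomial ideal: for every monomial `x^u ∈ I` with largest variable `x_j`
dividing it and every `i < j`, also `x_i x^u / x_j ∈ I`. -/
def IsStable (I : Ideal (MvPolynomial (Fin n) k)) : Prop :=
  ∀ u : Fin n →₀ ℕ, monomial u (1 : k) ∈ I →
    ∀ j : Fin n, j ∈ u.support → (∀ l ∈ u.support, l ≤ j) →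
      ∀ i : Fin n, i < j →
        monomial (u - Finsupp.single j 1 + Finsupp.single i 1) (1 : k) ∈ I

/-- The set of (exponent vectors of) minimal monomial generators of a monomial ideal. -/
def minGens (I : Ideal (MvPolynomial (Fin n) k)) : Set (Fin n →₀ ℕ) :=
  {u | monomial u (1 : k) ∈ I ∧ ∀ v : Fin n →₀ ℕ, monomial v (1 : k) ∈ I → v ≤ u → v = u}

/-- The irreducible monomial ideal `m^b = (x_i^{b_i} : b_i ≥ 1)`. -/
def irredPow (k : Type) [Field k] {n : ℕ} (b : Fin n →₀ ℕ) : Ideal (MvPolynomial (Fin n) k) :=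
  Ideal.span {f | ∃ i : Fin n, 1 ≤ b i ∧ f = (X i : MvPolynomial (Fin n) k) ^ b i}





/-- The product of the variables indexed by `F`. -/
def varProd (k : Type) [Field k] {n : ℕ} (F : Finset (Fin n)) : MvPolynomial (Fin n) k :=
  ∏ i ∈ F, X i

variable (M : Type) [AddCommGroup M] [Module (MvPolynomial (Fin n) k) M]

variable (k) in
/-- The localization of `M` at the product of the variables indexed by `F`. -/
abbrev locAt' (F : Finset (Fin n)) : Type :=
  LocalizedModule (Submonoid.powers (varProd k F)) M

variable (k n) in
/-- The `p`-th term of the Čech complex. -/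
abbrev cechC (p : ℕ) : Type :=
  DirectSum {F : Finset (Fin n) // F.card = p} (fun F => locAt' k M F.1)

lemma commute_aux {A : Type} [Ring A] {a b : A} (h : Commute a b) (hu : IsUnit (a * b)) :
    IsUnit a := by
  refine isUnit_iff_exists.mpr ⟨b * ↑hu.unit⁻¹, ?_, ?_⟩
  · rw [← mul_assoc]
    simpa using hu.unit.mul_inv
  · have hc : Commute a (↑hu.unit : A) := by
      have : (↑hu.unit : A) = a * b := hu.unit_spec
      rw [this]
      exact (Commute.refl a).mul_right h
    have hc' : Commute a (↑hu.unit⁻¹ : A) := hc.units_inv_right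
    calc b * ↑hu.unit⁻¹ * a = b * (a * ↑hu.unit⁻¹) := by rw [mul_assoc, hc'.eq]
    _ = (a * b) * ↑hu.unit⁻¹ := by rw [← mul_assoc]; exact congrArg (· * _) h.eq.symm
    _ = 1 := by simpa using hu.unit.mul_inv

lemma isUnit_algebraMap_end (u v w : MvPolynomial (Fin n) k) (hw : w = u * v)
    (s : Submonoid.powers u) :
    IsUnit ((algebraMap (MvPolynomial (Fin n) k)
      (Module.End (MvPolynomial (Fin n) k)
        (LocalizedModule (Submonoid.powers w) M))) s) := by
  subst hw
  obtain ⟨t, ht⟩ := s.2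
  have h1 : IsUnit ((algebraMap (MvPolynomial (Fin n) k)
      (Module.End (MvPolynomial (Fin n) k)
        (LocalizedModule (Submonoid.powers (u * v)) M))) ((u * v) ^ t)) :=
    IsLocalizedModule.map_units
      (LocalizedModule.mkLinearMap (Submonoid.powers (u * v)) M)
      (⟨(u * v) ^ t, ⟨t, rfl⟩⟩ : Submonoid.powers (u * v))
  have h2 : (u * v) ^ t = (s : MvPolynomial (Fin n) k) * v ^ t := by
    rw [mul_pow]; simp only [ht]
  rw [h2, map_mul] at h1
  exact commute_aux ((Commute.all _ _).map _) h1

/-- The canonical map between localizations of `M` for `F ⊆ G`. -/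
def locMap (F G : Finset (Fin n)) (h : F ⊆ G) :
    locAt' k M F →ₗ[MvPolynomial (Fin n) k] locAt' k M G := by
  refine LocalizedModule.lift _
    (LocalizedModule.mkLinearMap (Submonoid.powers (varProd k G)) M) ?_
  intro s
  have hFG : varProd k G = varProd k F * varProd k (G \ F) := by
    rw [varProd, varProd, varProd, ← Finset.prod_sdiff h, mul_comm]
  exact isUnit_algebraMap_end M _ _ _ hFG s

set_option maxHeartbeats 1000000 in
variable (k n) in
/-- The Čech differential. -/
def cechD (p : ℕ) : cechC k n M p →ₗ[MvPolynomial (Fin n) k] cechC k n M (p + 1) :=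
  DirectSum.toModule (MvPolynomial (Fin n) k) _ (cechC k n M (p + 1)) (fun F =>
    ∑ j : Fin n,
      if h : j ∈ F.1 then 0 else
        ((-1 : ℤ) ^ ((F.1.filter (· < j)).card)) •
          ((DirectSum.lof (MvPolynomial (Fin n) k) {G : Finset (Fin n) // G.card = p + 1}
              (fun G => locAt' k M G.1)
              ⟨insert j F.1, by rw [Finset.card_insert_of_notMem h, F.2]⟩).comp
            (locMap M F.1 (insert j F.1) (Finset.subset_insert _ _))))


variable (k n) in
/-- The cocycles at Čech degree `p`, as an additive subgroup. -/
def cechZ (p : ℕ) : AddSubgroup (cechC k n M p) :=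
  AddMonoidHom.ker (cechD k n M p).toAddMonoidHom

variable (k n) in
/-- The coboundaries at Čech degree `p`, as an additive subgroup. -/
def cechB (p : ℕ) : AddSubgroup (cechC k n M p) :=
  Nat.casesOn (motive := fun p => AddSubgroup (cechC k n M p)) p ⊥
    (fun q => AddMonoidHom.range (G := cechC k n M q) (N := cechC k n M (q + 1))
      ((cechD k n M q).toAddMonoidHom))

variable (k n) in
/-- The `p`-th (Čech) local cohomology of `M` with respect to the maximal graded
ideal: cocycles modulo coboundaries. -/
abbrev cechH (p : ℕ) : Type :=
  (cechZ k n M p) ⧸ ((cechB k n M p).addSubgroupOf (cechZ k n M p))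

variable (dg : ℤ → AddSubgroup M)

/-- The degree-`j` part of the localization of `M` at `x_F`, induced by a grading `dg`
of `M`: it is generated by the fractions `m / x_F^t` with `m` homogeneous of degree
`j + t·|F|`. -/
def locDeg (F : Finset (Fin n)) (j : ℤ) : AddSubgroup (locAt' k M F) :=
  AddSubgroup.closure
    {z | ∃ (t : ℕ) (m : M), m ∈ dg (j + t * F.card) ∧
      z = LocalizedModule.mk m (⟨varProd k F ^ t, ⟨t, rfl⟩⟩ : Submonoid.powers (varProd k F))}

variable (k n) in
/-- The degree-`j` part of the `p`-th Čech term. -/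
def cechDeg (p : ℕ) (j : ℤ) : AddSubgroup (cechC k n M p) where
  carrier := {x | ∀ F, x F ∈ locDeg M dg F.1 j}
  zero_mem' := by intro F; rw [DirectSum.zero_apply]; exact zero_mem _
  add_mem' := by intro a b ha hb F; rw [DirectSum.add_apply]; exact add_mem (ha F) (hb F)
  neg_mem' := by intro a ha F; rw [DFinsupp.neg_apply]; exact neg_mem (ha F)

variable (k n) in
/-- The degree-`j` part of the `p`-th local cohomology of `M`. -/
def cechHdeg (p : ℕ) (j : ℤ) : AddSubgroup (cechH k n M p) :=
  AddSubgroup.map (QuotientAddGroup.mk' ((cechB k n M p).addSubgroupOf (cechZ k n M p)))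
    ((cechDeg k n M dg p j).comap (cechZ k n M p).subtype)

variable (k n) in
/-- `a_i(M) = max{ j : H_m^i(M)_j ≠ 0 }`, as an extended real (`⊥ = -∞` if the
local cohomology vanishes). -/
def aInv (i : ℕ) : EReal :=
  sSup {x : EReal | ∃ j : ℤ, cechHdeg k n M dg i j ≠ ⊥ ∧ x = ((j : ℝ) : EReal)}

variable (k n) in
/-- The partial regularity `reg_t(M) = max{ a_i(M) + i : i ≤ t }`. -/
def regT (t : ℕ) : EReal :=
  sSup {x : EReal | ∃ i ≤ t, x = aInv k n M dg i + ((i : ℝ) : EReal)}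

variable (k n) in
/-- `a*_t(M) = max{ a_i(M) : i ≤ t }`. -/
def aStarT (t : ℕ) : EReal :=
  sSup {x : EReal | ∃ i ≤ t, x = aInv k n M dg i}

variable (k n) in
/-- The Castelnuovo–Mumford regularity `reg M = max_i { a_i(M) + i }`. -/
def cmReg : EReal :=
  sSup {x : EReal | ∃ i : ℕ, x = aInv k n M dg i + ((i : ℝ) : EReal)}

variable (k n) in
/-- The `a^*`-invariant `a^*(M) = max_i a_i(M)`. -/
def aStar : EReal :=
  sSup {x : EReal | ∃ i : ℕ, x = aInv k n M dg i}

/-- The canonical grading of a quotient `S/I` by a homogeneous ideal. -/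
def quotDeg (I : Ideal (MvPolynomial (Fin n) k)) (j : ℤ) :
    AddSubgroup ((MvPolynomial (Fin n) k) ⧸ I) :=
  if 0 ≤ j then
    AddSubgroup.map (Ideal.Quotient.mk I).toAddMonoidHom
      ((homogeneousSubmodule (Fin n) k j.toNat).toAddSubgroup)
  else ⊥

/-- The canonical grading of a homogeneous ideal `I ⊆ S`, viewed as an `S`-module. -/
def idealDeg (I : Ideal (MvPolynomial (Fin n) k)) (j : ℤ) : AddSubgroup I :=
  if 0 ≤ j then
    AddSubgroup.comap (Submodule.subtype I).toAddMonoidHom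
      ((homogeneousSubmodule (Fin n) k j.toNat).toAddSubgroup)
  else ⊥

variable (k n) in
/-- `a_i(S/I)` for a homogeneous ideal `I`. -/
def aQuot (I : Ideal (MvPolynomial (Fin n) k)) (i : ℕ) : EReal :=
  aInv k n ((MvPolynomial (Fin n) k) ⧸ I) (quotDeg I) i

variable (k n) in
/-- `a_i(I)` for a homogeneous ideal `I` viewed as a graded `S`-module. -/
def aIdealMod (I : Ideal (MvPolynomial (Fin n) k)) (i : ℕ) : EReal :=
  aInv k n I (idealDeg I) i


variable (k n) in
/-- `reg_t(S/I)` for a homogeneous ideal `I`. -/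
def regTQuot (I : Ideal (MvPolynomial (Fin n) k)) (t : ℕ) : EReal :=
  regT k n ((MvPolynomial (Fin n) k) ⧸ I) (quotDeg I) t

variable (k n) in
/-- `a*_t(S/I)` for a homogeneous ideal `I`. -/
def aStarTQuot (I : Ideal (MvPolynomial (Fin n) k)) (t : ℕ) : EReal :=
  aStarT k n ((MvPolynomial (Fin n) k) ⧸ I) (quotDeg I) t

variable (k n) in
/-- `reg(S/I)` for a homogeneous ideal `I`. -/
def cmRegQuot (I : Ideal (MvPolynomial (Fin n) k)) : EReal :=
  cmReg k n ((MvPolynomial (Fin n) k) ⧸ I) (quotDeg I)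

variable (k n) in
/-- `a^*(S/I)` for a homogeneous ideal `I`. -/
def aStarQuot (I : Ideal (MvPolynomial (Fin n) k)) : EReal :=
  aStar k n ((MvPolynomial (Fin n) k) ⧸ I) (quotDeg I)

variable (k n) in
/-- `reg_t(I)` for a homogeneous ideal `I` viewed as a graded module. -/
def regTIdeal (I : Ideal (MvPolynomial (Fin n) k)) (t : ℕ) : EReal :=
  regT k n I (idealDeg I) t

variable (k n) in
/-- `a*_t(I)` for a homogeneous ideal `I` viewed as a graded module. -/
def aStarTIdeal (I : Ideal (MvPolynomial (Fin n) k)) (t : ℕ) : EReal :=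
  aStarT k n I (idealDeg I) t

variable (k n) in
/-- `reg(I)`, the Castelnuovo–Mumford regularity of the ideal `I` as a graded module. -/
def cmRegIdeal (I : Ideal (MvPolynomial (Fin n) k)) : EReal :=
  cmReg k n I (idealDeg I)

variable (k n) in
/-- The depth of a module: the maximal length of a regular sequence contained in the
maximal graded ideal. -/
def moduleDepth (N : Type) [AddCommGroup N] [Module (MvPolynomial (Fin n) k) N] : ℕ :=
  sSup {d : ℕ | ∃ rs : List (MvPolynomial (Fin n) k), rs.length = d ∧
    (∀ r ∈ rs, r ∈ maxIdeal k n) ∧ RingTheory.Sequence.IsRegular N rs}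

variable (k n) in
/-- The (Krull) dimension of a module, i.e. of `S` modulo its annihilator. -/
def moduleDim (N : Type) [AddCommGroup N] [Module (MvPolynomial (Fin n) k) N] :
    WithBot ℕ∞ :=
  ringKrullDim ((MvPolynomial (Fin n) k) ⧸ Module.annihilator (MvPolynomial (Fin n) k) N)

variable (k n) in
/-- A Cohen–Macaulay module: zero, or of depth equal to its dimension. -/
def IsCMmod (N : Type) [AddCommGroup N] [Module (MvPolynomial (Fin n) k) N] : Prop :=
  Subsingleton N ∨ ((moduleDepth k n N : ℕ∞) : WithBot ℕ∞) = moduleDim k n N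

/-- The satiety `s(I^{sat}/I)`: the largest degree `j` with `(I^{sat}/I)_j ≠ 0`,
i.e. with `(I^{sat})_j ⊄ I_j`, as an extended real. -/
def satietyDeg {k : Type} [Field k] {n : ℕ} (I : Ideal (MvPolynomial (Fin n) k)) : EReal :=
  sSup {x : EReal | ∃ j : ℕ,
    (∃ f ∈ homogeneousSubmodule (Fin n) k j, f ∈ satur I ∧ f ∉ I) ∧ x = ((j : ℝ) : EReal)}

/-- Maximal degree of a minimal monomial generator. -/
def genDeg {k : Type} [Field k] {n : ℕ} (I : Ideal (MvPolynomial (Fin n) k)) : ℕ :=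
  sSup {d : ℕ | ∃ u ∈ minGens I, expDeg u = d}

/-- `m(u)`: the (1-based) largest index of a variable dividing the monomial `x^u`. -/
def mVal {n : ℕ} (u : Fin n →₀ ℕ) : ℕ :=
  u.support.sup (fun i => (i : ℕ) + 1)

variable (k n) in
/-- The degree-`t` part of a graded free module `⊕_j S(-d_j)`, realized as
`Fin r →₀ S`: the `j`-th coordinate must be homogeneous of degree `t - d j`. -/
def freeDeg (r : ℕ) (d : Fin r → ℤ) (t : ℤ) :
    AddSubgroup (Fin r →₀ MvPolynomial (Fin n) k) where
  carrier := {f | ∀ j : Fin r,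
    (0 ≤ t - d j → f j ∈ homogeneousSubmodule (Fin n) k (t - d j).toNat) ∧
    (t - d j < 0 → f j = 0)}
  zero_mem' := by
    intro j
    exact ⟨fun _ => by simp, fun _ => by simp⟩
  add_mem' := by
    intro a b ha hb j
    refine ⟨fun h => ?_, fun h => ?_⟩
    · simpa [Finsupp.add_apply] using add_mem ((ha j).1 h) ((hb j).1 h)
    · simp [Finsupp.add_apply, (ha j).2 h, (hb j).2 h]
  neg_mem' := by
    intro a ha j
    refine ⟨fun h => ?_, fun h => ?_⟩
    · simpa [Finsupp.neg_apply] using neg_mem ((ha j).1 h)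
    · simp [Finsupp.neg_apply, (ha j).2 h]

/-- A minimal graded free resolution
`0 → F_s → ⋯ → F_1 → F_0 → M → 0` of a graded module `M` (with grading `dg`),
where `F_i` is free with `rk i` generators of degrees `dgen i j`. -/
structure MinimalGradedFreeRes (dg : ℤ → AddSubgroup M) where
  /-- length of the resolution -/
  s : ℕ
  /-- ranks of the free modules -/
  rk : ℕ → ℕ
  /-- degrees of the generators -/
  dgen : (i : ℕ) → Fin (rk i) → ℤ
  /-- the differentials `F_{i+1} → F_i` -/
  φ : (i : ℕ) → (Fin (rk (i + 1)) →₀ MvPolynomial (Fin n) k) →ₗ[MvPolynomial (Fin n) k]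
      (Fin (rk i) →₀ MvPolynomial (Fin n) k)
  /-- the augmentation `F_0 → M` -/
  ε : (Fin (rk 0) →₀ MvPolynomial (Fin n) k) →ₗ[MvPolynomial (Fin n) k] M
  rk_eq_zero : ∀ i, s < i → rk i = 0
  ε_surj : Function.Surjective ε
  ε_graded : ∀ (t : ℤ) x, x ∈ freeDeg k n (rk 0) (dgen 0) t → ε x ∈ dg t
  φ_graded : ∀ (i : ℕ) (t : ℤ) x, x ∈ freeDeg k n (rk (i + 1)) (dgen (i + 1)) t →
    φ i x ∈ freeDeg k n (rk i) (dgen i) t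
  exact_aug : LinearMap.ker ε = LinearMap.range (φ 0)
  exact_mid : ∀ i : ℕ, LinearMap.ker (φ i) = LinearMap.range (φ (i + 1))
  minimal : ∀ (i : ℕ) x (j : Fin (rk i)), (φ i x) j ∈ maxIdeal k n


/-! ### Auxiliary lemmas -/

section BorelAux

lemma bt_expDeg_add (a b : Fin n →₀ ℕ) : expDeg (a + b) = expDeg a + expDeg b := by
  unfold expDeg; exact Finsupp.sum_add_index' (fun _ => rfl) (fun _ _ _ => rfl)

lemma bt_expDeg_single (l : Fin n) (m : ℕ) : expDeg (Finsupp.single l m) = m := by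
  unfold expDeg; simp [Finsupp.sum_single_index]

lemma bt_expDeg_eq_zero {g : Fin n →₀ ℕ} (h : expDeg g = 0) : g = 0 := by
  unfold expDeg at h
  rw [Finsupp.sum] at h
  ext l
  by_cases hl : l ∈ g.support
  · exact Finset.sum_eq_zero_iff.mp h l hl
  · simpa using Finsupp.notMem_support_iff.mp hl

lemma bt_expDeg_mono {a b : Fin n →₀ ℕ} (h : a ≤ b) : expDeg a ≤ expDeg b := by
  obtain ⟨c, rfl⟩ := exists_add_of_le h
  rw [bt_expDeg_add]; omega

lemma bt_le_support_decomp {h : Fin n →₀ ℕ} {l : Fin n} (hl : l ∈ h.support) :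
    ∃ h', h = h' + Finsupp.single l 1 := by
  refine ⟨h - Finsupp.single l 1, ?_⟩
  have : Finsupp.single l 1 ≤ h := by
    rw [Finsupp.le_def]
    intro m
    rcases eq_or_ne m l with rfl | hm
    · simpa using Nat.one_le_iff_ne_zero.mpr (Finsupp.mem_support_iff.mp hl)
    · simp [Finsupp.single_apply, Ne.symm hm]
  rw [tsub_add_cancel_of_le this]

lemma bt_support_nonempty_of_expDeg {g : Fin n →₀ ℕ} (h : expDeg g ≠ 0) :
    g.support.Nonempty := by
  rw [Finset.nonempty_iff_ne_empty]
  intro he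
  exact h (by rw [show g = 0 from Finsupp.support_eq_empty.mp he]; simp [expDeg])

lemma bt_exists_le_expDeg : ∀ (m : ℕ) (h : Fin n →₀ ℕ), expDeg h = m → ∀ d, d ≤ m →
    ∃ g, g ≤ h ∧ expDeg g = d := by
  intro m
  induction m with
  | zero => intro h hh d hd; exact ⟨h, le_refl _, by omega⟩
  | succ m ih =>
    intro h hh d hd
    rcases eq_or_lt_of_le hd with rfl | hdm
    · exact ⟨h, le_refl _, hh⟩
    · obtain ⟨l, hl⟩ := bt_support_nonempty_of_expDeg (g := h) (by rw [hh]; omega)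
      obtain ⟨h', rfl⟩ := bt_le_support_decomp hl
      have hh' : expDeg h' = m := by
        rw [bt_expDeg_add, bt_expDeg_single] at hh; omega
      obtain ⟨g, hg1, hg2⟩ := ih h' hh' d (by omega)
      exact ⟨g, le_trans hg1 (le_add_of_nonneg_right zero_le), hg2⟩

lemma bt_support_mono_le {a b : Fin n →₀ ℕ} (h : a ≤ b) : a.support ⊆ b.support := by
  intro m hm
  have h1 := Finsupp.mem_support_iff.mp hm
  rw [Finsupp.mem_support_iff]
  have h2 := Finsupp.le_def.mp h m
  omega

lemma bt_comp_le_expDeg (u : Fin n →₀ ℕ) (j : Fin n) : u j ≤ expDeg u := by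
  have h1 : Finsupp.single j (u j) ≤ u := by
    rw [Finsupp.le_def]
    intro m
    rcases eq_or_ne m j with rfl | hm
    · simp
    · simp [Finsupp.single_apply, Ne.symm hm]
  have := bt_expDeg_mono h1
  rwa [bt_expDeg_single] at this

lemma bt_expDeg_tsub {a b : Fin n →₀ ℕ} (h : a ≤ b) :
    expDeg b = expDeg a + expDeg (b - a) := by
  conv_lhs => rw [← add_tsub_cancel_of_le h]
  rw [bt_expDeg_add]

/-! monomial-ideal membership -/

lemma bt_upclosed {I : Ideal (MvPolynomial (Fin n) k)} {u v : Fin n →₀ ℕ}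
    (hu : monomial u (1 : k) ∈ I) (huv : u ≤ v) : monomial v (1 : k) ∈ I := by
  obtain ⟨c, rfl⟩ := exists_add_of_le huv
  have : monomial (u + c) (1 : k) = monomial c (1 : k) * monomial u (1 : k) := by
    rw [monomial_mul, add_comm, one_mul]
  rw [this]
  exact Ideal.mul_mem_left _ _ hu

lemma bt_mem_span_mono_iff (A : Set (Fin n →₀ ℕ)) (f : MvPolynomial (Fin n) k) :
    f ∈ Ideal.span ((fun u => monomial u (1 : k)) '' A) ↔
      ∀ v ∈ f.support, ∃ u ∈ A, u ≤ v := by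
  classical
  constructor
  · intro hf
    refine Submodule.span_induction ?_ ?_ ?_ ?_ hf
    · rintro x ⟨u, hu, rfl⟩ v hv
      rw [support_monomial] at hv
      simp only [if_neg (one_ne_zero (α := k))] at hv
      rw [Finset.mem_singleton] at hv
      exact ⟨u, hu, hv ▸ le_refl u⟩
    · intro v hv; simp at hv
    · intro x y _ _ hx hy v hv
      rcases Finset.mem_union.mp (Finsupp.support_add hv) with h | h
      · exact hx v h
      · exact hy v h
    · intro r x _ hx v hv
      have := MvPolynomial.support_mul r x hv
      rw [Finset.mem_add] at this
      obtain ⟨a, _, b, hb, rfl⟩ := this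
      obtain ⟨u, hu, hub⟩ := hx b hb
      exact ⟨u, hu, le_trans hub (le_add_self)⟩
  · intro hf
    rw [as_sum f]
    refine Ideal.sum_mem _ fun v hv => ?_
    obtain ⟨u, hu, huv⟩ := hf v hv
    obtain ⟨c, rfl⟩ := exists_add_of_le huv
    have : monomial (u + c) (coeff (u + c) f) =
        monomial c (coeff (u + c) f) * monomial u (1 : k) := by
      rw [monomial_mul, add_comm, mul_one]
    rw [this]
    exact Ideal.mul_mem_left _ _ (Ideal.subset_span ⟨u, hu, rfl⟩)

lemma bt_mono_mem_span_mono_iff (A : Set (Fin n →₀ ℕ)) (v : Fin n →₀ ℕ) :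
    monomial v (1 : k) ∈ Ideal.span ((fun u => monomial u (1 : k)) '' A) ↔
      ∃ u ∈ A, u ≤ v := by
  classical
  rw [bt_mem_span_mono_iff]
  constructor
  · intro h
    refine h v ?_
    rw [support_monomial, if_neg (one_ne_zero (α := k))]
    exact Finset.mem_singleton_self v
  · intro h w hw
    rw [support_monomial, if_neg (one_ne_zero (α := k))] at hw
    rw [Finset.mem_singleton] at hw
    exact hw ▸ h

/-! colon machinery -/

lemma bt_colon_anti {I P Q : Ideal (MvPolynomial (Fin n) k)} (h : Q ≤ P) :
    Submodule.colon I P ≤ Submodule.colon I Q := by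
  intro x hx
  rw [Submodule.mem_colon] at hx ⊢
  exact fun p hp => hx p (h hp)

lemma bt_colon_pow_mono (I J : Ideal (MvPolynomial (Fin n) k)) :
    Monotone (fun t : ℕ => Submodule.colon I ((J ^ t : Ideal (MvPolynomial (Fin n) k)) : Set (MvPolynomial (Fin n) k))) := by
  intro s t hst
  exact bt_colon_anti (Ideal.pow_le_pow_right hst)

lemma bt_mem_infColon {I J : Ideal (MvPolynomial (Fin n) k)} {x : MvPolynomial (Fin n) k} :
    x ∈ infColon I J ↔ ∃ t : ℕ, x ∈ Submodule.colon I ((J ^ t : Ideal (MvPolynomial (Fin n) k)) : Set (MvPolynomial (Fin n) k)) := by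
  unfold infColon
  exact Submodule.mem_iSup_of_directed _ (bt_colon_pow_mono I J).directed_le

lemma bt_pow_le_span_monomials (i : Fin n) (T : ℕ) :
    (Ideal.span {f : MvPolynomial (Fin n) k | ∃ j ≤ i, f = X j}) ^ T ≤
      Ideal.span ((fun u => monomial u (1 : k)) ''
        {a : Fin n →₀ ℕ | (∀ l ∈ a.support, l ≤ i) ∧ expDeg a = T}) := by
  induction T with
  | zero =>
    rw [pow_zero, Ideal.one_eq_top, top_le_iff, Ideal.eq_top_iff_one]
    refine Ideal.subset_span ⟨0, ⟨by simp, by simp [expDeg]⟩, ?_⟩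
    simp
  | succ T ih =>
    rw [pow_succ]
    refine le_trans (Ideal.mul_mono ih (le_refl _)) ?_
    rw [Ideal.span_mul_span]
    rw [Ideal.span_le]
    rintro x hx
    rw [Set.mem_mul] at hx
    obtain ⟨s, ⟨a, ⟨ha1, ha2⟩, rfl⟩, t, ⟨j, hj, rfl⟩, hx⟩ := hx
    symm at hx
    subst hx
    have hXj : (X j : MvPolynomial (Fin n) k) = monomial (Finsupp.single j 1) 1 := by
      have := X_pow_eq_monomial (e := 1) (n := j) (R := k)
      rwa [pow_one] at this
    refine Ideal.subset_span ⟨a + Finsupp.single j 1, ⟨?_, ?_⟩, ?_⟩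
    · intro l hl
      rcases Finset.mem_union.mp (Finsupp.support_add hl) with h | h
      · exact ha1 l h
      · have := Finsupp.support_single_subset h
        rw [Finset.mem_singleton] at this
        exact this ▸ hj
    · rw [bt_expDeg_add, ha2, bt_expDeg_single]
    · rw [hXj, monomial_mul, mul_one]

lemma bt_X_pow_mem_pow {i j : Fin n} (h : j ≤ i) (t : ℕ) :
    (X j : MvPolynomial (Fin n) k) ^ t ∈
      (Ideal.span {f : MvPolynomial (Fin n) k | ∃ j ≤ i, f = X j}) ^ t :=
  Ideal.pow_mem_pow (Ideal.subset_span
    (show (X j : MvPolynomial (Fin n) k) ∈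
      {f : MvPolynomial (Fin n) k | ∃ j ≤ i, f = X j} from ⟨j, h, rfl⟩)) t

/-! truncations and masses of exponent vectors -/

def btTruncLT (c : Fin n) (z : Fin n →₀ ℕ) : Fin n →₀ ℕ := z.filter (fun l => l < c)
def btTruncLE (c : Fin n) (z : Fin n →₀ ℕ) : Fin n →₀ ℕ := z.filter (fun l => l ≤ c)
def btMassGE (c : Fin n) (z : Fin n →₀ ℕ) : ℕ := expDeg (z.filter (fun l => c ≤ l))
def btMassGT (c : Fin n) (z : Fin n →₀ ℕ) : ℕ := expDeg (z.filter (fun l => c < l))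

lemma btTruncLT_add (c : Fin n) (a b : Fin n →₀ ℕ) :
    btTruncLT c (a + b) = btTruncLT c a + btTruncLT c b := Finsupp.filter_add

lemma btTruncLE_add (c : Fin n) (a b : Fin n →₀ ℕ) :
    btTruncLE c (a + b) = btTruncLE c a + btTruncLE c b := Finsupp.filter_add

lemma btMassGE_add (c : Fin n) (a b : Fin n →₀ ℕ) :
    btMassGE c (a + b) = btMassGE c a + btMassGE c b := by
  unfold btMassGE; rw [Finsupp.filter_add, bt_expDeg_add]

lemma btMassGT_add (c : Fin n) (a b : Fin n →₀ ℕ) :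
    btMassGT c (a + b) = btMassGT c a + btMassGT c b := by
  unfold btMassGT; rw [Finsupp.filter_add, bt_expDeg_add]

lemma btTruncLT_single_ge (c l : Fin n) (m : ℕ) (h : c ≤ l) :
    btTruncLT c (Finsupp.single l m) = 0 := by
  unfold btTruncLT; rw [Finsupp.filter_single_of_neg]; exact not_lt_of_ge h

lemma btTruncLT_single_lt (c l : Fin n) (m : ℕ) (h : l < c) :
    btTruncLT c (Finsupp.single l m) = Finsupp.single l m := by
  unfold btTruncLT; rw [Finsupp.filter_single_of_pos]; exact h

lemma btTruncLE_single_gt (c l : Fin n) (m : ℕ) (h : c < l) :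
    btTruncLE c (Finsupp.single l m) = 0 := by
  unfold btTruncLE; rw [Finsupp.filter_single_of_neg]; exact not_le_of_gt h

lemma btTruncLE_single_le (c l : Fin n) (m : ℕ) (h : l ≤ c) :
    btTruncLE c (Finsupp.single l m) = Finsupp.single l m := by
  unfold btTruncLE; rw [Finsupp.filter_single_of_pos]; exact h

lemma btMassGE_single (c l : Fin n) (m : ℕ) :
    btMassGE c (Finsupp.single l m) = if c ≤ l then m else 0 := by
  unfold btMassGE
  split
  · rw [Finsupp.filter_single_of_pos _ (by assumption), bt_expDeg_single]
  · rw [Finsupp.filter_single_of_neg _ (by assumption)]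
    simp [expDeg]

lemma btMassGT_single (c l : Fin n) (m : ℕ) :
    btMassGT c (Finsupp.single l m) = if c < l then m else 0 := by
  unfold btMassGT
  split
  · rw [Finsupp.filter_single_of_pos _ (by assumption), bt_expDeg_single]
  · rw [Finsupp.filter_single_of_neg _ (by assumption)]
    simp [expDeg]

lemma btTruncLT_add_filterGE (c : Fin n) (z : Fin n →₀ ℕ) :
    btTruncLT c z + z.filter (fun l => c ≤ l) = z := by
  classical
  ext m
  simp only [Finsupp.add_apply, btTruncLT, Finsupp.filter_apply]
  by_cases h : m < c
  · simp [h, not_le_of_gt h]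
  · simp [h, le_of_not_gt h]

lemma btTruncLE_add_filterGT (c : Fin n) (z : Fin n →₀ ℕ) :
    btTruncLE c z + z.filter (fun l => c < l) = z := by
  classical
  ext m
  simp only [Finsupp.add_apply, btTruncLE, Finsupp.filter_apply]
  by_cases h : m ≤ c
  · simp [h, not_lt_of_ge h]
  · simp [h, lt_of_not_ge h]

lemma btTruncLT_le (c : Fin n) (z : Fin n →₀ ℕ) : btTruncLT c z ≤ z := by
  rw [Finsupp.le_def]
  intro m
  rw [btTruncLT, Finsupp.filter_apply]
  split <;> simp

lemma btTruncLE_le (c : Fin n) (z : Fin n →₀ ℕ) : btTruncLE c z ≤ z := by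
  rw [Finsupp.le_def]
  intro m
  rw [btTruncLE, Finsupp.filter_apply]
  split <;> simp

lemma bt_pigeonhole {g : Fin n →₀ ℕ} {s : ℕ} (hs : 0 < s) (hdeg : expDeg g = s) :
    ∃ l ∈ g.support, s ≤ n * g l := by
  have hne : g.support.Nonempty := by
    rw [Finsupp.support_nonempty_iff]
    rintro rfl
    simp [expDeg] at hdeg; omega
  obtain ⟨l, hl, hmax⟩ := Finset.exists_max_image g.support (fun m => g m) hne
  refine ⟨l, hl, ?_⟩
  calc s = expDeg g := hdeg.symm
  _ = ∑ m ∈ g.support, g m := rfl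
  _ ≤ g.support.card * g l := by
      rw [← smul_eq_mul]
      exact Finset.sum_le_card_nsmul _ _ _ (fun m hm => hmax m hm)
  _ ≤ n * g l := by
      have h1 : g.support.card ≤ n := by
        have := Finset.card_le_univ g.support
        simpa using this
      exact Nat.mul_le_mul_right _ h1

/-! stable ideals allow redistribution of the high part -/

lemma bt_stable_redistribute {L : Ideal (MvPolynomial (Fin n) k)} (hL : IsStable L) :
    ∀ (μ : ℕ) (z g : Fin n →₀ ℕ) (c : Fin n),
      btMassGE c z + btMassGT c z ≤ μ → monomial z (1 : k) ∈ L →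
      (∀ l ∈ g.support, l ≤ c) → expDeg g = btMassGE c z →
      monomial (btTruncLT c z + g) (1 : k) ∈ L := by
  intro μ
  induction μ with
  | zero =>
    intro z g c hμ hz hg hdeg
    have h0 : btMassGE c z = 0 := by omega
    have hg0 : g = 0 := bt_expDeg_eq_zero (by rw [hdeg, h0])
    have hfz : z.filter (fun l => c ≤ l) = 0 := bt_expDeg_eq_zero h0
    have htz : btTruncLT c z = z := by
      have := btTruncLT_add_filterGE c z
      rwa [hfz, add_zero] at this
    rw [hg0, add_zero, htz]; exact hz
  | succ μ ih =>
    intro z g c hμ hz hg hdeg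
    by_cases h0 : btMassGE c z = 0
    · have hg0 : g = 0 := bt_expDeg_eq_zero (by rw [hdeg, h0])
      have hfz : z.filter (fun l => c ≤ l) = 0 := bt_expDeg_eq_zero h0
      have htz : btTruncLT c z = z := by
        have := btTruncLT_add_filterGE c z
        rwa [hfz, add_zero] at this
      rw [hg0, add_zero, htz]; exact hz
    · have hzne : z.support.Nonempty := by
        rw [Finsupp.support_nonempty_iff]
        rintro rfl
        exact h0 (by simp [btMassGE, expDeg, Finsupp.filter_zero])
      set j' := z.support.max' hzne with hj'def
      have hj'mem : j' ∈ z.support := z.support.max'_mem hzne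
      have hj'max : ∀ l ∈ z.support, l ≤ j' := fun l hl => z.support.le_max' l hl
      have hcj' : c ≤ j' := by
        by_contra hc
        push_neg at hc
        apply h0
        have hfz : z.filter (fun l => c ≤ l) = 0 := by
          ext m
          rw [Finsupp.filter_apply]
          by_cases hm : c ≤ m
          · simp only [if_pos hm]
            by_contra hzm
            have hms : m ∈ z.support := Finsupp.mem_support_iff.mpr (by simpa using hzm)
            · exact absurd (le_trans hm (hj'max m hms)) (not_le_of_gt hc)
          · simp [hm]
        rw [btMassGE, hfz]; simp [expDeg]
      obtain ⟨z', hz'⟩ := bt_le_support_decomp hj'mem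
      by_cases hca : ∃ l ∈ g.support, l ≠ c
      · obtain ⟨l, hlg, hlc⟩ := hca
        have hlltc : l < c := lt_of_le_of_ne (hg l hlg) hlc
        have hllj' : l < j' := lt_of_lt_of_le hlltc hcj'
        have hstep := hL z hz j' hj'mem hj'max l hllj'
        have hzsub : z - Finsupp.single j' 1 = z' := by
          rw [hz', add_tsub_cancel_right]
        rw [hzsub] at hstep
        obtain ⟨g', hg'⟩ := bt_le_support_decomp hlg
        have key := ih (z' + Finsupp.single l 1) g' c ?_ hstep ?_ ?_
        · have e1 : btTruncLT c (z' + Finsupp.single l 1) =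
              btTruncLT c z' + Finsupp.single l 1 := by
            rw [btTruncLT_add, btTruncLT_single_lt c l 1 hlltc]
          have e2 : btTruncLT c z = btTruncLT c z' := by
            rw [hz', btTruncLT_add, btTruncLT_single_ge c j' 1 hcj', add_zero]
          rw [e1] at key
          have e3 : btTruncLT c z' + Finsupp.single l 1 + g' = btTruncLT c z + g := by
            rw [e2, hg', add_assoc, add_comm (Finsupp.single l 1) g']
          rwa [e3] at key
        · have m1 : btMassGE c z = btMassGE c z' + 1 := by
            rw [hz', btMassGE_add, btMassGE_single, if_pos hcj']
          have m2 : btMassGT c z = btMassGT c z' + (if c < j' then 1 else 0) := by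
            rw [hz', btMassGT_add, btMassGT_single]
          have m3 : btMassGE c (z' + Finsupp.single l 1) = btMassGE c z' := by
            rw [btMassGE_add, btMassGE_single, if_neg (not_le_of_gt hlltc), add_zero]
          have m4 : btMassGT c (z' + Finsupp.single l 1) = btMassGT c z' := by
            rw [btMassGT_add, btMassGT_single, if_neg (by
              intro hcl
              exact absurd (lt_trans hcl hlltc) (lt_irrefl c)), add_zero]
          split at m2 <;> omega
        · intro m hm
          have h1 : g' m ≠ 0 := Finsupp.mem_support_iff.mp hm
          apply hg
          rw [Finsupp.mem_support_iff, hg', Finsupp.add_apply]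
          intro h
          exact h1 (Nat.eq_zero_of_add_eq_zero_right h)
        · have e4 : expDeg g = expDeg g' + 1 := by
            rw [hg', bt_expDeg_add, bt_expDeg_single]
          have m1 : btMassGE c z = btMassGE c z' + 1 := by
            rw [hz', btMassGE_add, btMassGE_single, if_pos hcj']
          have m3 : btMassGE c (z' + Finsupp.single l 1) = btMassGE c z' := by
            rw [btMassGE_add, btMassGE_single, if_neg (not_le_of_gt hlltc), add_zero]
          omega
      · push_neg at hca
        have hgc : g = Finsupp.single c (g c) := by
          ext m
          rcases eq_or_ne m c with rfl | hm
          · simp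
          · rw [Finsupp.single_apply, if_neg (Ne.symm hm)]
            by_contra hgm
            exact hm (hca m (Finsupp.mem_support_iff.mpr (by simpa using hgm)))
        rcases eq_or_lt_of_le hcj' with hcj'eq | hcj'lt
        · have hsupp : ∀ l ∈ z.support, l ≤ c := by
            intro l hl; rw [hcj'eq]; exact hj'max l hl
          have hfilt : z.filter (fun l => c ≤ l) = Finsupp.single c (z c) := by
            ext m
            rw [Finsupp.filter_apply]
            rcases eq_or_ne m c with rfl | hm
            · simp
            · rw [Finsupp.single_apply, if_neg (Ne.symm hm)]
              by_cases hcm : c ≤ m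
              · rw [if_pos hcm]
                by_contra hzm
                have hms : m ∈ z.support := Finsupp.mem_support_iff.mpr (by simpa using hzm)
                exact hm (le_antisymm (hsupp m hms) hcm)
              · rw [if_neg hcm]
          have hgz : g = z.filter (fun l => c ≤ l) := by
            rw [hfilt, hgc]
            congr 1
            have e5 : expDeg g = z c := by
              rw [hdeg, btMassGE, hfilt, bt_expDeg_single]
            rw [← e5, hgc, bt_expDeg_single, Finsupp.single_eq_same]
          rw [hgz, btTruncLT_add_filterGE]
          exact hz
        · have hstep := hL z hz j' hj'mem hj'max c hcj'lt
          have hzsub : z - Finsupp.single j' 1 = z' := by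
            rw [hz', add_tsub_cancel_right]
          rw [hzsub] at hstep
          have key := ih (z' + Finsupp.single c 1) g c ?_ hstep hg ?_
          · have e1 : btTruncLT c (z' + Finsupp.single c 1) = btTruncLT c z' := by
              rw [btTruncLT_add, btTruncLT_single_ge c c 1 (le_refl c), add_zero]
            have e2 : btTruncLT c z = btTruncLT c z' := by
              rw [hz', btTruncLT_add, btTruncLT_single_ge c j' 1 hcj', add_zero]
            rw [e1, ← e2] at key
            exact key
          · have m1 : btMassGE c z = btMassGE c z' + 1 := by
              rw [hz', btMassGE_add, btMassGE_single, if_pos hcj']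
            have m2 : btMassGT c z = btMassGT c z' + 1 := by
              rw [hz', btMassGT_add, btMassGT_single, if_pos hcj'lt]
            have m3 : btMassGE c (z' + Finsupp.single c 1) = btMassGE c z' + 1 := by
              rw [btMassGE_add, btMassGE_single, if_pos (le_refl c)]
            have m4 : btMassGT c (z' + Finsupp.single c 1) = btMassGT c z' := by
              rw [btMassGT_add, btMassGT_single, if_neg (lt_irrefl c), add_zero]
            omega
          · have m1 : btMassGE c z = btMassGE c z' + 1 := by
              rw [hz', btMassGE_add, btMassGE_single, if_pos hcj']
            have m3 : btMassGE c (z' + Finsupp.single c 1) = btMassGE c z' + 1 := by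
              rw [btMassGE_add, btMassGE_single, if_pos (le_refl c)]
            omega

/-! Borel type ideals allow redistribution below a cutoff, after multiplying
by a suitable power -/

lemma bt_borel_star {I : Ideal (MvPolynomial (Fin n) k)} (hB : IsBorelType I) :
    ∀ (N : ℕ) (u : Fin n →₀ ℕ) (c : Fin n), btMassGT c u ≤ N → monomial u (1 : k) ∈ I →
      ∃ s : ℕ, ∀ g : Fin n →₀ ℕ, (∀ l ∈ g.support, l ≤ c) → expDeg g = s →
        monomial (btTruncLE c u + g) (1 : k) ∈ I := by
  intro N
  induction N with
  | zero =>
    intro u c hN hu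
    refine ⟨0, fun g hg hdeg => ?_⟩
    have hg0 : g = 0 := bt_expDeg_eq_zero hdeg
    have hfu : u.filter (fun l => c < l) = 0 := bt_expDeg_eq_zero (by
      have : btMassGT c u = 0 := by omega
      exact this)
    have htu : btTruncLE c u = u := by
      have := btTruncLE_add_filterGT c u
      rwa [hfu, add_zero] at this
    rw [hg0, add_zero, htu]; exact hu
  | succ N ih =>
    intro u c hN hu
    by_cases h0 : btMassGT c u = 0
    · refine ⟨0, fun g hg hdeg => ?_⟩
      have hg0 : g = 0 := bt_expDeg_eq_zero hdeg
      have hfu : u.filter (fun l => c < l) = 0 := bt_expDeg_eq_zero h0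
      have htu : btTruncLE c u = u := by
        have := btTruncLE_add_filterGT c u
        rwa [hfu, add_zero] at this
      rw [hg0, add_zero, htu]; exact hu
    · have hune : u.support.Nonempty := by
        rw [Finsupp.support_nonempty_iff]
        rintro rfl
        exact h0 (by simp [btMassGT, expDeg, Finsupp.filter_zero])
      set j' := u.support.max' hune with hj'def
      have hj'mem : j' ∈ u.support := u.support.max'_mem hune
      have hj'max : ∀ l ∈ u.support, l ≤ j' := fun l hl => u.support.le_max' l hl
      have hcj' : c < j' := by
        by_contra hc
        push_neg at hc
        apply h0
        have hfu : u.filter (fun l => c < l) = 0 := by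
          ext m
          rw [Finsupp.filter_apply]
          by_cases hm : c < m
          · rw [if_pos hm]
            by_contra hzm
            have hms : m ∈ u.support := Finsupp.mem_support_iff.mpr (by simpa using hzm)
            exact absurd (lt_of_lt_of_le hm (le_trans (hj'max m hms) hc)) (lt_irrefl c)
          · simp [hm]
        rw [btMassGT, hfu]; simp [expDeg]
      obtain ⟨u', hu'⟩ := bt_le_support_decomp hj'mem
      have hXj' : (X j' : MvPolynomial (Fin n) k) = monomial (Finsupp.single j' 1) 1 := by
        have := X_pow_eq_monomial (e := 1) (n := j') (R := k)
        rwa [pow_one] at this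
      have hcolon1 : monomial u' (1 : k) ∈ Submodule.colon I ((Ideal.span {X j'} ^ 1 : Ideal (MvPolynomial (Fin n) k)) : Set (MvPolynomial (Fin n) k)) := by
        rw [pow_one, Submodule.mem_colon]
        intro p hp
        obtain ⟨q, rfl⟩ := Ideal.mem_span_singleton.mp hp
        have e6 : monomial u' (1 : k) • (X j' * q) = q * monomial u (1 : k) := by
          rw [smul_eq_mul, hu', hXj']
          ring_nf
          rw [monomial_mul, one_mul, add_comm]
          ring
        rw [e6]
        exact Ideal.mul_mem_left _ _ hu
      have hinf : monomial u' (1 : k) ∈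
          infColon I (Ideal.span {f | ∃ i ≤ j', f = X i}) := by
        rw [hB j', bt_mem_infColon]
        exact ⟨1, hcolon1⟩
      obtain ⟨s₁, hs₁⟩ := bt_mem_infColon.mp hinf
      have hstep : ∀ l : Fin n, l ≤ c →
          monomial (u' + Finsupp.single l s₁) (1 : k) ∈ I := by
        intro l hl
        have hmem := Submodule.mem_colon.mp hs₁ _
          (bt_X_pow_mem_pow (le_of_lt (lt_of_le_of_lt hl hcj')) s₁)
        have e7 : monomial u' (1 : k) • ((X l : MvPolynomial (Fin n) k) ^ s₁) =
            monomial (u' + Finsupp.single l s₁) (1 : k) := by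
          rw [smul_eq_mul, X_pow_eq_monomial, monomial_mul, one_mul]
        rwa [e7] at hmem
      have hIH : ∀ l : Fin n, l ≤ c → ∃ s₂ : ℕ, ∀ g : Fin n →₀ ℕ,
          (∀ m ∈ g.support, m ≤ c) → expDeg g = s₂ →
          monomial (btTruncLE c (u' + Finsupp.single l s₁) + g) (1 : k) ∈ I := by
        intro l hl
        apply ih
        · have m1 : btMassGT c u = btMassGT c u' + 1 := by
            rw [hu', btMassGT_add, btMassGT_single, if_pos hcj']
          have m2 : btMassGT c (u' + Finsupp.single l s₁) = btMassGT c u' := by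
            rw [btMassGT_add, btMassGT_single, if_neg (not_lt_of_ge hl), add_zero]
          omega
        · exact hstep l hl
      classical
      let s2 : Fin n → ℕ := fun l => if h : l ≤ c then (hIH l h).choose else 0
      set S₂ := Finset.univ.sup s2 with hS₂
      refine ⟨n * (s₁ + S₂ + 1), fun g hg hdeg => ?_⟩
      have hn1 : 0 < n := Fin.pos c
      obtain ⟨l, hlg, hls⟩ := bt_pigeonhole (by positivity) hdeg
      have hlc : l ≤ c := hg l hlg
      have hgl : s₁ + S₂ + 1 ≤ g l := Nat.le_of_mul_le_mul_left hls hn1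
      have hsingle_le : Finsupp.single l s₁ ≤ g := by
        rw [Finsupp.le_def]
        intro m
        rcases eq_or_ne m l with rfl | hm
        · rw [Finsupp.single_eq_same]; omega
        · rw [Finsupp.single_apply, if_neg (Ne.symm hm)]; omega
      obtain ⟨h, hh⟩ : ∃ h, g = Finsupp.single l s₁ + h := by
        refine ⟨g - Finsupp.single l s₁, ?_⟩
        rw [add_tsub_cancel_of_le hsingle_le]
      have hdegh : expDeg h = n * (s₁ + S₂ + 1) - s₁ := by
        have := bt_expDeg_add (Finsupp.single l s₁) h
        rw [← hh, hdeg, bt_expDeg_single] at this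
        omega
      have hS2l : s2 l ≤ expDeg h := by
        have h1 : s2 l ≤ S₂ := Finset.le_sup (Finset.mem_univ l)
        have h2 : s₁ + S₂ + 1 ≤ n * (s₁ + S₂ + 1) := Nat.le_mul_of_pos_left _ hn1
        omega
      obtain ⟨g₂, hg₂le, hg₂deg⟩ := bt_exists_le_expDeg (expDeg h) h rfl (s2 l) hS2l
      have hs2spec : ∀ (l : Fin n) (hl : l ≤ c), ∀ g : Fin n →₀ ℕ,
          (∀ m ∈ g.support, m ≤ c) → expDeg g = s2 l →
          monomial (btTruncLE c (u' + Finsupp.single l s₁) + g) (1 : k) ∈ I := by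
        intro l hl
        simp only [s2, dif_pos hl]
        exact (hIH l hl).choose_spec
      have hspec := hs2spec l hlc g₂ ?_ hg₂deg
      · have e1 : btTruncLE c (u' + Finsupp.single l s₁) =
            btTruncLE c u' + Finsupp.single l s₁ := by
          rw [btTruncLE_add, btTruncLE_single_le c l s₁ hlc]
        have e2 : btTruncLE c u = btTruncLE c u' := by
          rw [hu', btTruncLE_add, btTruncLE_single_gt c j' 1 hcj', add_zero]
        rw [e1] at hspec
        refine bt_upclosed hspec ?_
        rw [← e2, hh, add_assoc]
        exact add_le_add_right (add_le_add_right hg₂le _) _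
      · intro m hm
        apply hg
        have h1 : m ∈ h.support := bt_support_mono_le hg₂le hm
        have hhle : h ≤ g := by rw [hh]; exact le_add_self
        exact bt_support_mono_le hhle h1

/-! finite monomial generation -/

lemma bt_exists_finite_monomial_gens {I : Ideal (MvPolynomial (Fin n) k)}
    (hI : IsMonomialIdeal I) :
    ∃ A₀ : Finset (Fin n →₀ ℕ),
      I = Ideal.span ((fun u => monomial u (1 : k)) '' (↑A₀ : Set (Fin n →₀ ℕ))) := by
  classical
  obtain ⟨A, hA⟩ := hI
  obtain ⟨T, hT⟩ := IsNoetherian.noetherian I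
  have hx : ∀ x ∈ T, ∃ S : Finset (Fin n →₀ ℕ), (↑S : Set (Fin n →₀ ℕ)) ⊆ A ∧
      x ∈ Ideal.span ((fun u => monomial u (1 : k)) '' (↑S : Set (Fin n →₀ ℕ))) := by
    intro x hxT
    have hxI : x ∈ I := hT ▸ Submodule.subset_span hxT
    rw [hA] at hxI
    obtain ⟨T', hT'sub, hT'mem⟩ := Submodule.mem_span_finite_of_mem_span hxI
    obtain ⟨S, hSA, hSim⟩ := Finset.subset_set_image_iff.mp hT'sub
    refine ⟨S, hSA, ?_⟩
    have himg : ((fun u => monomial u (1 : k)) '' (↑S : Set (Fin n →₀ ℕ)))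
        = (↑T' : Set (MvPolynomial (Fin n) k)) := by
      rw [← hSim, Finset.coe_image]
    rw [himg]
    exact hT'mem
  let A₀ : Finset (Fin n →₀ ℕ) := T.attach.biUnion (fun x => (hx x.1 x.2).choose)
  refine ⟨A₀, le_antisymm ?_ ?_⟩
  · rw [← hT]
    rw [Submodule.span_le]
    intro x hxT
    have hsub : (hx x hxT).choose ⊆ A₀ :=
      Finset.subset_biUnion_of_mem (fun (y : {y // y ∈ T}) => (hx y.1 y.2).choose)
        (Finset.mem_attach T ⟨x, hxT⟩)
    exact Ideal.span_mono (Set.image_mono hsub) ((hx x hxT).choose_spec.2)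
  · rw [Ideal.span_le]
    rintro y ⟨u, huA₀, rfl⟩
    simp only [A₀, Finset.coe_biUnion, Set.mem_iUnion] at huA₀
    obtain ⟨x, hxmem, hu⟩ := huA₀
    have huA : u ∈ A := (hx x.1 x.2).choose_spec.1 hu
    rw [hA]
    exact Ideal.subset_span ⟨u, huA, rfl⟩

lemma bt_truncGE_set_eq (I : Ideal (MvPolynomial (Fin n) k)) (e : ℕ) :
    {f | ∃ u : Fin n →₀ ℕ, monomial u (1 : k) ∈ I ∧ e ≤ expDeg u ∧ f = monomial u (1 : k)}
      = (fun u => monomial u (1 : k)) '' {u | monomial u (1 : k) ∈ I ∧ e ≤ expDeg u} := by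
  ext f
  constructor
  · rintro ⟨u, h1, h2, rfl⟩; exact ⟨u, ⟨h1, h2⟩, rfl⟩
  · rintro ⟨u, ⟨h1, h2⟩, rfl⟩; exact ⟨u, h1, h2, rfl⟩

lemma bt_truncGE_le (I : Ideal (MvPolynomial (Fin n) k)) (e : ℕ) : truncGE I e ≤ I := by
  rw [truncGE, Ideal.span_le]
  rintro f ⟨u, h1, _, rfl⟩
  exact h1

end BorelAux

/-- A monomial ideal is of Borel type iff its truncations `I_{≥e}`
are stable for all sufficiently large `e`. -/
theorem borelType_iff_eventually_stable_truncation
    {k : Type} [Field k] {n : ℕ} (I : Ideal (MvPolynomial (Fin n) k))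
    (hI : IsMonomialIdeal I) :
    IsBorelType I ↔ ∃ e₀ : ℕ, ∀ e : ℕ, e₀ ≤ e → IsStable (truncGE I e) := by
  classical
  constructor
  · -- Borel type ⇒ truncations eventually stable
    intro hB
    obtain ⟨A₀, hA₀⟩ := bt_exists_finite_monomial_gens hI
    set D := A₀.sup expDeg with hD
    have hstar : ∀ (u : Fin n →₀ ℕ) (c : Fin n), monomial u (1 : k) ∈ I →
        ∃ s : ℕ, ∀ g : Fin n →₀ ℕ, (∀ l ∈ g.support, l ≤ c) → expDeg g = s →
          monomial (btTruncLE c u + g) (1 : k) ∈ I :=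
      fun u c hu => bt_borel_star hB (btMassGT c u) u c le_rfl hu
    let sfun : (Fin n →₀ ℕ) → Fin n → ℕ := fun u c =>
      if h : monomial u (1 : k) ∈ I then (hstar u c h).choose else 0
    have hsfun : ∀ (u : Fin n →₀ ℕ) (c : Fin n) (h : monomial u (1 : k) ∈ I),
        ∀ g : Fin n →₀ ℕ, (∀ l ∈ g.support, l ≤ c) → expDeg g = sfun u c →
        monomial (btTruncLE c u + g) (1 : k) ∈ I := by
      intro u c h
      simp only [sfun, dif_pos h]
      exact (hstar u c h).choose_spec
    set S := A₀.sup (fun u => Finset.univ.sup (sfun u)) with hS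
    refine ⟨2 * D + S, fun e he => ?_⟩
    intro v hv j hjsupp hjmax i hij
    rw [truncGE, bt_truncGE_set_eq, bt_mono_mem_span_mono_iff] at hv
    obtain ⟨w, ⟨hwI, hwdeg⟩, hwv⟩ := hv
    have hvI : monomial v (1 : k) ∈ I := bt_upclosed hwI hwv
    have hvdeg : e ≤ expDeg v := le_trans hwdeg (bt_expDeg_mono hwv)
    obtain ⟨v'', hv''⟩ := bt_le_support_decomp hjsupp
    have hvsub : v - Finsupp.single j 1 = v'' := by rw [hv'', add_tsub_cancel_right]
    rw [hvsub]
    set v' := v'' + Finsupp.single i 1 with hv'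
    have coords : ∀ l : Fin n, v l = v'' l + (if j = l then 1 else 0) ∧
        v' l = v'' l + (if i = l then 1 else 0) := by
      intro l
      constructor
      · rw [hv'', Finsupp.add_apply, Finsupp.single_apply]
      · rw [hv', Finsupp.add_apply, Finsupp.single_apply]
    have hv'deg : expDeg v' = expDeg v := by
      rw [hv', hv'', bt_expDeg_add, bt_expDeg_add, bt_expDeg_single, bt_expDeg_single]
    suffices hv'I : monomial v' (1 : k) ∈ I by
      exact Ideal.subset_span ⟨v', hv'I, by rw [hv'deg]; exact hvdeg, rfl⟩
    have hvmem : monomial v (1 : k) ∈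
        Ideal.span ((fun u => monomial u (1 : k)) '' (↑A₀ : Set (Fin n →₀ ℕ))) := by
      rw [← hA₀]; exact hvI
    obtain ⟨u, huA₀, huv⟩ := (bt_mono_mem_span_mono_iff _ _).mp hvmem
    rw [Finset.mem_coe] at huA₀
    have huI : monomial u (1 : k) ∈ I := by
      rw [hA₀]; exact Ideal.subset_span ⟨u, huA₀, rfl⟩
    have hujvj : u j ≤ v j := Finsupp.le_def.mp huv j
    have hij' : i ≠ j := ne_of_lt hij
    rcases lt_or_eq_of_le hujvj with hlt | heq
    · -- the generator still divides after the exchange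
      refine bt_upclosed huI ?_
      rw [Finsupp.le_def]
      intro l
      obtain ⟨c1, c2⟩ := coords l
      have h1 := Finsupp.le_def.mp huv l
      rcases eq_or_ne j l with rfl | hjl
      · rw [if_neg (fun h : i = j => hij' h)] at c2
        rw [if_pos rfl] at c1
        omega
      · rw [if_neg hjl] at c1
        rcases eq_or_ne i l with rfl | hil
        · rw [if_pos rfl] at c2; omega
        · rw [if_neg hil] at c2; omega
    · -- u j = v j : use the Borel-star property below j
      have hjval : (0 : ℕ) < j.val := by
        have h5 := hij
        rw [Fin.lt_def] at h5
        omega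
      set c : Fin n := ⟨j.val - 1, by omega⟩ with hc
      have hcspec : ∀ l : Fin n, l ≤ c ↔ l < j := by
        intro l
        rw [Fin.le_def, Fin.lt_def]
        simp only [hc]
        omega
      have hcltj : c < j := (hcspec c).mp (le_refl c)
      have hsleS : sfun u c ≤ S := by
        calc sfun u c ≤ Finset.univ.sup (sfun u) := Finset.le_sup (Finset.mem_univ c)
        _ ≤ S := by
            rw [hS]
            exact Finset.le_sup (f := fun u => Finset.univ.sup (sfun u)) huA₀
      have hujD : u j ≤ D :=
        le_trans (bt_comp_le_expDeg u j) (by rw [hD]; exact Finset.le_sup huA₀)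
      have htleD : expDeg (btTruncLE c u) ≤ D :=
        le_trans (bt_expDeg_mono (btTruncLE_le c u)) (by rw [hD]; exact Finset.le_sup huA₀)
      have hbase : btTruncLE c u ≤ btTruncLE c v' := by
        rw [Finsupp.le_def]
        intro l
        rw [btTruncLE, btTruncLE, Finsupp.filter_apply, Finsupp.filter_apply]
        by_cases hlc : l ≤ c
        · rw [if_pos hlc, if_pos hlc]
          obtain ⟨c1, c2⟩ := coords l
          have h1 := Finsupp.le_def.mp huv l
          have hlj : l ≠ j := ne_of_lt ((hcspec l).mp hlc)
          rw [if_neg (fun hjl : j = l => hlj hjl.symm)] at c1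
          rcases eq_or_ne i l with rfl | hil
          · rw [if_pos rfl] at c2; omega
          · rw [if_neg hil] at c2; omega
        · rw [if_neg hlc, if_neg hlc]
      have hfiltv' : v'.filter (fun l => c < l) = Finsupp.single j (v'' j) := by
        ext m
        rw [Finsupp.filter_apply]
        obtain ⟨c1, c2⟩ := coords m
        by_cases hcm : c < m
        · rw [if_pos hcm]
          rcases eq_or_ne m j with rfl | hmj
          · rw [Finsupp.single_eq_same]
            rw [if_neg (fun h : i = m => hij' h)] at c2
            omega
          · have hjm : j < m := by
              have h1 : ¬ m ≤ c := not_le_of_gt hcm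
              have h2 : ¬ m < j := fun hh => h1 ((hcspec m).mpr hh)
              exact lt_of_le_of_ne (le_of_not_gt h2) (fun h => hmj h.symm)
            have him : i ≠ m := ne_of_lt (lt_trans hij hjm)
            have hvm : v m = 0 := by
              by_contra hz
              exact absurd (hjmax m (Finsupp.mem_support_iff.mpr hz)) (not_le_of_gt hjm)
            rw [Finsupp.single_apply, if_neg (fun h : j = m => hmj h.symm)]
            rw [if_neg him] at c2
            rw [if_neg (fun h : j = m => hmj h.symm)] at c1
            omega
        · rw [if_neg hcm, Finsupp.single_apply,
            if_neg (fun h : j = m => hcm (h ▸ hcltj))]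
      have E1 : expDeg v' = expDeg (btTruncLE c v') + v'' j := by
        have h6 := congrArg expDeg (btTruncLE_add_filterGT c v')
        rw [bt_expDeg_add, hfiltv', bt_expDeg_single] at h6
        omega
      have E2 : expDeg (btTruncLE c v') =
          expDeg (btTruncLE c u) + expDeg (btTruncLE c v' - btTruncLE c u) :=
        bt_expDeg_tsub hbase
      have E4 : v'' j + 1 = u j := by
        obtain ⟨c1, _⟩ := coords j
        rw [if_pos rfl] at c1
        omega
      have hsle : sfun u c ≤ expDeg (btTruncLE c v' - btTruncLE c u) := by
        have hvdeg' : e ≤ expDeg v' := by rw [hv'deg]; exact hvdeg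
        omega
      obtain ⟨g, hgle, hgdeg⟩ := bt_exists_le_expDeg _ (btTruncLE c v' - btTruncLE c u) rfl
        (sfun u c) hsle
      have hgsupp : ∀ l ∈ g.support, l ≤ c := by
        intro l hl
        have h1 : l ∈ (btTruncLE c v' - btTruncLE c u).support := bt_support_mono_le hgle hl
        have h2 : l ∈ (btTruncLE c v').support := bt_support_mono_le tsub_le_self h1
        rw [btTruncLE, Finsupp.support_filter, Finset.mem_filter] at h2
        exact h2.2
      have hres := hsfun u c huI g hgsupp hgdeg
      refine bt_upclosed hres ?_
      calc btTruncLE c u + g ≤ btTruncLE c u + (btTruncLE c v' - btTruncLE c u) :=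
            add_le_add_right hgle _
      _ = btTruncLE c v' := add_tsub_cancel_of_le hbase
      _ ≤ v' := btTruncLE_le c v'
  · -- truncations eventually stable ⇒ Borel type
    rintro ⟨e₀, hstable⟩
    have hLstable : IsStable (truncGE I e₀) := hstable e₀ le_rfl
    obtain ⟨A, hA⟩ := hI
    intro i
    refine le_antisymm ?_ ?_
    · -- easy inclusion
      unfold infColon
      apply iSup_mono
      intro t
      apply bt_colon_anti
      apply Ideal.pow_right_mono
      rw [Ideal.span_le, Set.singleton_subset_iff]
      exact Ideal.subset_span ⟨i, le_refl i, rfl⟩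
    · intro f hf
      obtain ⟨t, hcolon⟩ := bt_mem_infColon.mp hf
      have hfX : f * (X i : MvPolynomial (Fin n) k) ^ t ∈ I := by
        have h1 := Submodule.mem_colon.mp hcolon ((X i : MvPolynomial (Fin n) k) ^ t) ?_
        · rwa [smul_eq_mul] at h1
        · rw [Ideal.span_singleton_pow]
          exact Ideal.subset_span rfl
      have hmon : ∀ v ∈ f.support, monomial (v + Finsupp.single i t) (1 : k) ∈ I := by
        intro v hv
        have hcoeff : coeff (v + Finsupp.single i t) (f * (X i : MvPolynomial (Fin n) k) ^ t)
            = coeff v f := by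
          rw [X_pow_eq_monomial, coeff_mul_monomial, mul_one]
        have hsupp : v + Finsupp.single i t ∈
            (f * (X i : MvPolynomial (Fin n) k) ^ t).support := by
          rw [mem_support_iff, hcoeff]
          exact mem_support_iff.mp hv
        obtain ⟨u, huA, hule⟩ :=
          (bt_mem_span_mono_iff A _).mp (by rw [← hA]; exact hfX) _ hsupp
        refine bt_upclosed ?_ hule
        rw [hA]
        exact Ideal.subset_span ⟨u, huA, rfl⟩
      have hMon : ∀ v ∈ f.support, ∀ a : Fin n →₀ ℕ, (∀ l ∈ a.support, l ≤ i) →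
          expDeg a = btMassGE i (v + Finsupp.single i (t + e₀)) →
          monomial (v + a) (1 : k) ∈ I := by
        intro v hv a ha hadeg
        set z := v + Finsupp.single i (t + e₀) with hz
        have hzI : monomial z (1 : k) ∈ I := by
          refine bt_upclosed (hmon v hv) ?_
          rw [hz]
          refine add_le_add_right ?_ v
          rw [Finsupp.le_def]
          intro m
          rcases eq_or_ne m i with rfl | hm
          · simp
          · simp [Finsupp.single_apply, Ne.symm hm]
        have hzdeg : e₀ ≤ expDeg z := by
          rw [hz, bt_expDeg_add, bt_expDeg_single]
          omega
        have hzL : monomial z (1 : k) ∈ truncGE I e₀ :=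
          Ideal.subset_span ⟨z, hzI, hzdeg, rfl⟩
        have hred := bt_stable_redistribute hLstable
          (btMassGE i z + btMassGT i z) z a i le_rfl hzL ha hadeg
        have hredI : monomial (btTruncLT i z + a) (1 : k) ∈ I := bt_truncGE_le I e₀ hred
        refine bt_upclosed hredI ?_
        refine add_le_add_left ?_ a
        have e8 : btTruncLT i z = btTruncLT i v := by
          rw [hz, btTruncLT_add, btTruncLT_single_ge i i _ (le_refl i), add_zero]
        rw [e8]
        exact btTruncLT_le i v
      set T := f.support.sup (fun v => btMassGE i (v + Finsupp.single i (t + e₀))) with hT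
      have hMonT : ∀ v ∈ f.support, ∀ a : Fin n →₀ ℕ, (∀ l ∈ a.support, l ≤ i) →
          expDeg a = T → monomial (v + a) (1 : k) ∈ I := by
        intro v hv a ha hadeg
        obtain ⟨a', ha'le, ha'deg⟩ := bt_exists_le_expDeg T a hadeg
          (btMassGE i (v + Finsupp.single i (t + e₀)))
          (Finset.le_sup (f := fun v => btMassGE i (v + Finsupp.single i (t + e₀))) hv)
        exact bt_upclosed
          (hMon v hv a' (fun l hl => ha l (bt_support_mono_le ha'le hl)) ha'deg)
          (add_le_add_right ha'le v)
      rw [bt_mem_infColon]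
      refine ⟨T, ?_⟩
      rw [Submodule.mem_colon]
      intro p hp
      have hple : p ∈ Ideal.span ((fun u => monomial u (1 : k)) ''
          {a : Fin n →₀ ℕ | (∀ l ∈ a.support, l ≤ i) ∧ expDeg a = T}) :=
        bt_pow_le_span_monomials i T hp
      have hcol : Ideal.span ((fun u => monomial u (1 : k)) ''
          {a : Fin n →₀ ℕ | (∀ l ∈ a.support, l ≤ i) ∧ expDeg a = T}) ≤
          Submodule.colon I (Ideal.span {f}) := by
        rw [Ideal.span_le]
        rintro x ⟨a, ⟨ha1, ha2⟩, rfl⟩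
        rw [SetLike.mem_coe, Submodule.mem_colon]
        intro q hq
        obtain ⟨r, rfl⟩ := Ideal.mem_span_singleton.mp hq
        have hma : monomial a (1 : k) * f ∈ I := by
          have hsum : monomial a (1 : k) * f =
              ∑ v ∈ f.support, monomial a (1 : k) * monomial v (coeff v f) := by
            rw [← Finset.mul_sum, ← as_sum f]
          rw [hsum]
          refine Ideal.sum_mem _ fun v hv => ?_
          rw [monomial_mul, one_mul]
          have h2 : monomial (v + a) (1 : k) ∈ I := hMonT v hv a ha1 ha2
          have h3 : monomial (a + v) (coeff v f) =
              C (coeff v f) * monomial (a + v) (1 : k) := by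
            rw [C_mul_monomial, mul_one]
          rw [h3, add_comm a v]
          exact Ideal.mul_mem_left _ _ h2
        have h9 : monomial a (1 : k) • (f * r) = (monomial a (1 : k) * f) * r := by
          rw [smul_eq_mul]; ring
        rw [h9]
        exact Ideal.mul_mem_right _ _ hma
      have hpcol := hcol hple
      rw [Submodule.mem_colon] at hpcol
      have h4 := hpcol f (Ideal.subset_span rfl)
      rw [smul_eq_mul] at h4 ⊢
      rw [mul_comm]
      exact h4

end
end

section
/- If I is a monomial ideal of Borel type in S = k[x_1,...,x_n], then the sequence x_n, x_{n-1}, ..., x_1 is an almost regular sequence on S/I; that is, for each i, the multiplication map by x_i on S/(I + (x_n,...,x_{i+1})) has kernel of finite length (equivalently, the kernel vanishes in all sufficiently large degrees). -/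
open MvPolynomial DirectSum

noncomputable section




variable {k : Type} [Field k] {n : ℕ}

variable (M : Type) [AddCommGroup M] [Module (MvPolynomial (Fin n) k) M]

variable (dg : ℤ → AddSubgroup M)

/-- In a Noetherian module, every set has a finite subset with the same span. -/
lemma exists_finset_span_eq {R M : Type*} [Ring R] [AddCommGroup M] [Module R M]
    [IsNoetherian R M] (S : Set M) :
    ∃ T : Finset M, ↑T ⊆ S ∧ Submodule.span R (T : Set M) = Submodule.span R S := by
  classical
  obtain ⟨G, hG⟩ := IsNoetherian.noetherian (Submodule.span R S)
  choose T hTsub hTmem using fun g : {x // x ∈ G} =>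
    Submodule.mem_span_finite_of_mem_span
      (show (g : M) ∈ Submodule.span R S from hG ▸ Submodule.subset_span g.2)
  refine ⟨G.attach.biUnion T, ?_, le_antisymm (Submodule.span_le.2 ?_) ?_⟩
  · intro x hx
    obtain ⟨g, -, hg⟩ := Finset.mem_biUnion.1 hx
    exact hTsub g hg
  · intro x hx
    obtain ⟨g, -, hg⟩ := Finset.mem_biUnion.1 hx
    exact Submodule.subset_span (hTsub g hg)
  · rw [← hG]
    refine Submodule.span_le.2 fun g hg => ?_
    refine Submodule.span_mono ?_ (hTmem ⟨g, hg⟩)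
    intro x hx
    exact Finset.mem_biUnion.2 ⟨⟨g, hg⟩, Finset.mem_attach _ _, hx⟩

lemma expDeg_add {n : ℕ} (u v : Fin n →₀ ℕ) : expDeg (u + v) = expDeg u + expDeg v :=
  Finsupp.sum_add_index' (fun _ => rfl) (fun _ _ _ => rfl)

lemma monomial_mem_pow {k : Type} [Field k] {n : ℕ} (i : Fin n) :
    ∀ v : Fin n →₀ ℕ, (∀ l ∈ v.support, l ≤ i) →
      (monomial v (1 : k)) ∈ (Ideal.span {f : MvPolynomial (Fin n) k | ∃ j ≤ i, f = X j}) ^ (expDeg v) := by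
  intro v
  induction v using Finsupp.induction with
  | zero => intro _; simp [expDeg]
  | single_add a b f ha hb ih =>
    intro hsupp
    have hfa : f a = 0 := Finsupp.notMem_support_iff.1 ha
    have hsub : ∀ l ∈ f.support, l ≤ i := by
      intro l hl
      refine hsupp l ?_
      rw [Finsupp.mem_support_iff] at hl ⊢
      simp [Finsupp.add_apply]
      intro h; omega
    have hai : a ≤ i := by
      refine hsupp a ?_
      rw [Finsupp.mem_support_iff]
      simp [Finsupp.add_apply, hfa, hb]
    have hXa : (X a : MvPolynomial (Fin n) k) ∈
        Ideal.span {f : MvPolynomial (Fin n) k | ∃ j ≤ i, f = X j} :=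
      Ideal.subset_span ⟨a, hai, rfl⟩
    have : (monomial (Finsupp.single a b + f) (1 : k)) = X a ^ b * monomial f 1 := by
      rw [X_pow_eq_monomial, monomial_mul, one_mul]
    rw [this, expDeg_add]
    have h1 : expDeg (Finsupp.single a b) = b := Finsupp.sum_single_index rfl
    rw [h1, pow_add]
    exact Ideal.mul_mem_mul (Ideal.pow_mem_pow hXa b) (ih hsub)

lemma borel_key {k : Type} [Field k] {n : ℕ} (I : Ideal (MvPolynomial (Fin n) k))
    (hB : IsBorelType I) (i : Fin n) :
    ∃ D : ℕ, ∀ u : Fin n →₀ ℕ, (∀ l ∈ u.support, l ≤ i) → D ≤ expDeg u →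
      monomial (u + Finsupp.single i 1) (1 : k) ∈ I → monomial u (1 : k) ∈ I := by
  classical
  set mi : Ideal (MvPolynomial (Fin n) k) := Ideal.span {f : MvPolynomial (Fin n) k | ∃ j ≤ i, f = X j} with hmi
  -- the stabilizing colon chain
  have hmono : Monotone (fun t : ℕ => Submodule.colon I ((mi ^ t : Ideal (MvPolynomial (Fin n) k)) : Set (MvPolynomial (Fin n) k))) := by
    intro a b hab
    exact Submodule.colon_mono le_rfl (SetLike.coe_subset_coe.2 (Ideal.pow_le_pow_right hab))
  have hnoe : IsNoetherian (MvPolynomial (Fin n) k) (MvPolynomial (Fin n) k) :=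
    inferInstance
  obtain ⟨t₀, ht₀⟩ := monotone_stabilizes_iff_noetherian.mpr hnoe ⟨_, hmono⟩
  have hsup : infColon I mi = Submodule.colon I ((mi ^ t₀ : Ideal (MvPolynomial (Fin n) k)) : Set (MvPolynomial (Fin n) k)) := by
    refine le_antisymm (iSup_le fun t => ?_) (le_iSup (fun t => Submodule.colon I ((mi ^ t : Ideal (MvPolynomial (Fin n) k)) : Set (MvPolynomial (Fin n) k))) t₀)
    rcases le_total t t₀ with h | h
    · exact hmono h
    · exact le_of_eq (ht₀ t h).symm
  -- the ideal of w with x_i x^w ∈ I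
  set W : Set (Fin n →₀ ℕ) := {w | monomial (w + Finsupp.single i 1) (1 : k) ∈ I} with hW
  obtain ⟨T, hTsub, hTspan⟩ := exists_finset_span_eq (R := MvPolynomial (Fin n) k)
    ((fun u => monomial u (1 : k)) '' W : Set (MvPolynomial (Fin n) k))
  set W₀ : Set (Fin n →₀ ℕ) := W ∩ ((fun u => monomial u (1 : k)) ⁻¹' ↑T) with hW₀
  have hW₀fin : W₀.Finite := by
    refine Set.Finite.subset (T.finite_toSet.preimage
      ((monomial_left_injective (one_ne_zero (α := k))).injOn)) ?_
    exact Set.inter_subset_right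
  have himg : (fun u => monomial u (1 : k)) '' W₀ = (↑T : Set (MvPolynomial (Fin n) k)) := by
    apply Set.Subset.antisymm
    · rintro _ ⟨w, hw, rfl⟩; exact hw.2
    · intro p hp
      obtain ⟨w, hwW, rfl⟩ := hTsub hp
      exact ⟨w, ⟨hwW, hp⟩, rfl⟩
  have hspan₀ : Ideal.span ((fun u => monomial u (1 : k)) '' W₀) =
      Ideal.span ((fun u => monomial u (1 : k)) '' W) := by rw [himg]; exact hTspan
  refine ⟨t₀ + hW₀fin.toFinset.sup expDeg, ?_⟩
  intro u hsupp hdeg huW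
  -- x^u is in span of monomials of W₀
  have hu_mem : monomial u (1 : k) ∈ Ideal.span ((fun u => monomial u (1 : k)) '' W₀) := by
    rw [hspan₀]
    exact Ideal.subset_span ⟨u, huW, rfl⟩
  rw [mem_ideal_span_monomial_image] at hu_mem
  have hu_supp : u ∈ (monomial u (1 : k)).support := by
    rw [mem_support_iff, coeff_monomial, if_pos rfl]; exact one_ne_zero
  obtain ⟨w, hwW₀, hwu⟩ := hu_mem u hu_supp
  -- x^w ∈ I : mi^t₀
  have hw_colon : monomial w (1 : k) ∈ Submodule.colon I ((mi ^ t₀ : Ideal (MvPolynomial (Fin n) k)) : Set (MvPolynomial (Fin n) k)) := by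
    rw [← hsup, hmi, hB i]
    have h1 : monomial w (1 : k) ∈ Submodule.colon I ((Ideal.span {X i} ^ 1 : Ideal (MvPolynomial (Fin n) k)) : Set (MvPolynomial (Fin n) k)) := by
      rw [pow_one]
      rw [Submodule.mem_colon]
      intro p hp
      rw [SetLike.mem_coe, Ideal.mem_span_singleton] at hp
      obtain ⟨c, rfl⟩ := hp
      have : monomial w (1 : k) • (X i * c) = c * monomial (w + Finsupp.single i 1) (1 : k) := by
        rw [smul_eq_mul, X, ← mul_assoc, monomial_mul, one_mul, mul_comm]
      rw [this]
      exact Ideal.mul_mem_left _ _ hwW₀.1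
    exact le_iSup (fun t => Submodule.colon I ((Ideal.span {X i} ^ t : Ideal (MvPolynomial (Fin n) k)) : Set (MvPolynomial (Fin n) k))) 1 h1
  -- factor u = w + v
  set v : Fin n →₀ ℕ := u - w with hv
  have huv : w + v = u := add_tsub_cancel_of_le hwu
  have hvsupp : ∀ l ∈ v.support, l ≤ i := by
    intro l hl
    refine hsupp l ?_
    rw [Finsupp.mem_support_iff] at hl ⊢
    intro h0
    apply hl
    rw [hv, Finsupp.tsub_apply, h0]
    simp
  have hdegs : expDeg w + expDeg v = expDeg u := by rw [← expDeg_add, huv]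
  have hwbound : expDeg w ≤ hW₀fin.toFinset.sup expDeg :=
    Finset.le_sup (hW₀fin.mem_toFinset.mpr hwW₀)
  have hvdeg : t₀ ≤ expDeg v := by omega
  have hv_mem : monomial v (1 : k) ∈ mi ^ t₀ :=
    Ideal.pow_le_pow_right hvdeg (monomial_mem_pow i v hvsupp)
  have := Submodule.mem_colon.1 hw_colon (monomial v (1 : k)) hv_mem
  rwa [smul_eq_mul, monomial_mul, mul_one, huv] at this

/-- If `I` is of Borel type, then `x_n, …, x_1` is an almost regular
sequence on `S/I`: for each `i`, the kernel of multiplication by `x_i` on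
`S/(I + (x_n, …, x_{i+1}))` vanishes in all sufficiently large degrees. -/
theorem almostRegular_of_borelType
    {k : Type} [Field k] {n : ℕ} (I : Ideal (MvPolynomial (Fin n) k))
    (hI : IsMonomialIdeal I) (hB : IsBorelType I) (i : Fin n) :
    ∃ D : ℕ, ∀ j : ℕ, D ≤ j →
      ∀ f ∈ homogeneousSubmodule (Fin n) k j,
        X i * f ∈ I ⊔ Ideal.span {g | ∃ l : Fin n, i < l ∧ g = X l} →
        f ∈ I ⊔ Ideal.span {g | ∃ l : Fin n, i < l ∧ g = X l} := by
  classical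
  obtain ⟨A, hA⟩ := hI
  obtain ⟨D, hD⟩ := borel_key I hB i
  refine ⟨D, ?_⟩
  intro j hj f hf hmem
  set A' : Set (Fin n →₀ ℕ) := A ∪ {u | ∃ l : Fin n, i < l ∧ u = Finsupp.single l 1} with hA'
  have hJ : I ⊔ Ideal.span {g | ∃ l : Fin n, i < l ∧ g = X l} =
      Ideal.span ((fun u => monomial u (1 : k)) '' A') := by
    rw [hA', Set.image_union, Ideal.span_union, ← hA]
    congr 2
    ext g
    constructor
    · rintro ⟨l, hl, rfl⟩; exact ⟨Finsupp.single l 1, ⟨l, hl, rfl⟩, rfl⟩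
    · rintro ⟨u, ⟨l, hl, rfl⟩, rfl⟩; exact ⟨l, hl, rfl⟩
  rw [hJ] at hmem ⊢
  rw [mem_ideal_span_monomial_image] at hmem ⊢
  intro u hu
  by_cases hbig : ∃ l : Fin n, i < l ∧ u l ≠ 0
  · obtain ⟨l, hl, hul⟩ := hbig
    exact ⟨Finsupp.single l 1, Or.inr ⟨l, hl, rfl⟩,
      Finsupp.single_le_iff.2 (Nat.one_le_iff_ne_zero.2 hul)⟩
  push_neg at hbig
  have hsupp : ∀ l ∈ u.support, l ≤ i := by
    intro l hl
    by_contra h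
    exact (Finsupp.mem_support_iff.1 hl) (hbig l (lt_of_not_ge h))
  have hu' : Finsupp.single i 1 + u ∈ (X i * f).support := by
    rw [support_X_mul]
    exact Finset.mem_map.2 ⟨u, hu, rfl⟩
  obtain ⟨s, hs, hsle⟩ := hmem _ hu'
  rcases hs with hsA | ⟨l, hl, rfl⟩
  · by_cases hsu : s ≤ u
    · exact ⟨s, Or.inl hsA, hsu⟩
    · have hXiu : monomial (u + Finsupp.single i 1) (1 : k) ∈ I := by
        rw [hA, mem_ideal_span_monomial_image]
        intro x hx
        rw [support_monomial, if_neg (one_ne_zero (α := k)), Finset.mem_singleton] at hx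
        subst hx
        exact ⟨s, hsA, by rwa [add_comm] at hsle⟩
      have hdegu : expDeg u = j := by
        have hhom := (mem_homogeneousSubmodule _ _).1 hf
        have := hhom (MvPolynomial.mem_support_iff.1 hu)
        rw [show (Finsupp.weight 1 : (Fin n →₀ ℕ) →+ ℕ) = Finsupp.weight (fun _ => 1) from rfl, ← Finsupp.degree_eq_weight_one] at this
        exact this
      have hmemI := hD u hsupp (le_of_le_of_eq hj hdegu.symm) hXiu
      rw [hA, mem_ideal_span_monomial_image] at hmemI
      obtain ⟨s', hs', hs'u⟩ := hmemI u (by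
        rw [support_monomial, if_neg (one_ne_zero (α := k))]
        exact Finset.mem_singleton_self u)
      exact ⟨s', Or.inl hs', hs'u⟩
  · exfalso
    have h1 := Finsupp.single_le_iff.1 hsle
    rw [Finsupp.add_apply, Finsupp.single_apply, if_neg (ne_of_lt hl)] at h1
    rw [hbig l hl] at h1
    omega


end
end

section
/- Let I be a monomial ideal of Borel type in S = k[x_1,...,x_n] with irredundant irreducible decomposition I = ⋂_{b∈B} m^b, and let I = I_0 ⊆ I_1 ⊆ ... ⊆ I_r = S be its sequential chain with n_l = m(I_l). Then for each l = 1,...,r−1, I_l = ⋂ { m^b : b ∈ B, supp(b) ⊆ {1,...,n_l} }. -/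
open MvPolynomial DirectSum

noncomputable section




variable {k : Type} [Field k] {n : ℕ}

variable (M : Type) [AddCommGroup M] [Module (MvPolynomial (Fin n) k) M]

variable (dg : ℤ → AddSubgroup M)

namespace SeqChainAux

open MvPolynomial

variable {k : Type} [Field k] {n : ℕ}

lemma span_monomials_support {A : Set (Fin n →₀ ℕ)} {f : MvPolynomial (Fin n) k}
    (hf : f ∈ Ideal.span ((fun u => monomial u (1 : k)) '' A)) :
    ∀ u ∈ f.support, ∃ a ∈ A, a ≤ u := by
  classical
  refine Submodule.span_induction (p := fun x _ => ∀ u ∈ x.support, ∃ a ∈ A, a ≤ u) ?_ ?_ ?_ ?_ hf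
  · rintro g ⟨a, ha, rfl⟩ u hu
    rw [support_monomial, if_neg (one_ne_zero)] at hu
    rw [Finset.mem_singleton] at hu
    exact ⟨a, ha, hu ▸ le_refl a⟩
  · intro u hu
    simp at hu
  · intro g h _ _ hg hh u hu
    rcases Finset.mem_union.mp (MvPolynomial.support_add hu) with h' | h'
    · exact hg u h'
    · exact hh u h'
  · intro p g _ hg u hu
    have hu' : u ∈ (p * g).support := by simpa [smul_eq_mul] using hu
    obtain ⟨v, hv, w, hw, rfl⟩ := Finset.mem_add.mp (MvPolynomial.support_mul p g hu')
    obtain ⟨a, ha, haw⟩ := hg w hw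
    exact ⟨a, ha, haw.trans (le_add_self)⟩

lemma mem_span_monomials {A : Set (Fin n →₀ ℕ)} {f : MvPolynomial (Fin n) k} :
    f ∈ Ideal.span ((fun u => monomial u (1 : k)) '' A) ↔
      ∀ u ∈ f.support, ∃ a ∈ A, a ≤ u := by
  constructor
  · exact span_monomials_support
  · intro h
    have h2 : (∑ v ∈ f.support, monomial v (coeff v f)) ∈
        Ideal.span ((fun u => monomial u (1 : k)) '' A) := by
      refine Submodule.sum_mem _ fun u hu => ?_
      obtain ⟨a, ha, hau⟩ := h u hu
      have he : monomial u (coeff u f) = monomial (u - a) (coeff u f) * monomial a (1 : k) := by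
        rw [monomial_mul, mul_one, tsub_add_cancel_of_le hau]
      rw [he]
      exact Ideal.mul_mem_left _ _ (Ideal.subset_span ⟨a, ha, rfl⟩)
    rwa [support_sum_monomial_coeff] at h2

lemma monomial_mem_span {A : Set (Fin n →₀ ℕ)} {u : Fin n →₀ ℕ} :
    monomial u (1 : k) ∈ Ideal.span ((fun u => monomial u (1 : k)) '' A) ↔ ∃ a ∈ A, a ≤ u := by
  rw [mem_span_monomials]
  constructor
  · intro h
    refine h u ?_
    classical
    rw [support_monomial, if_neg (one_ne_zero)]
    exact Finset.mem_singleton_self u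
  · intro h v hv
    classical
    rw [support_monomial, if_neg (one_ne_zero), Finset.mem_singleton] at hv
    exact hv ▸ h

lemma irredPow_eq (b : Fin n →₀ ℕ) :
    irredPow k b = Ideal.span ((fun u => monomial u (1 : k)) ''
      {v | ∃ i : Fin n, 1 ≤ b i ∧ v = Finsupp.single i (b i)}) := by
  unfold irredPow
  congr 1
  ext f
  constructor
  · rintro ⟨i, hi, rfl⟩
    exact ⟨Finsupp.single i (b i), ⟨i, hi, rfl⟩, (X_pow_eq_monomial).symm⟩
  · rintro ⟨v, ⟨i, hi, rfl⟩, rfl⟩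
    exact ⟨i, hi, (X_pow_eq_monomial).symm⟩

lemma mem_irredPow {b : Fin n →₀ ℕ} {f : MvPolynomial (Fin n) k} :
    f ∈ irredPow k b ↔ ∀ u ∈ f.support, ∃ i : Fin n, 1 ≤ b i ∧ b i ≤ u i := by
  rw [irredPow_eq, mem_span_monomials]
  constructor
  · intro h u hu
    obtain ⟨a, ⟨i, hi, rfl⟩, hle⟩ := h u hu
    exact ⟨i, hi, Finsupp.single_le_iff.mp hle⟩
  · intro h u hu
    obtain ⟨i, hi, hle⟩ := h u hu
    exact ⟨Finsupp.single i (b i), ⟨i, hi, rfl⟩, Finsupp.single_le_iff.mpr hle⟩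

lemma monomial_mem_irredPow {b u : Fin n →₀ ℕ} :
    monomial u (1 : k) ∈ irredPow k b ↔ ∃ i : Fin n, 1 ≤ b i ∧ b i ≤ u i := by
  rw [irredPow_eq, monomial_mem_span]
  constructor
  · rintro ⟨a, ⟨i, hi, rfl⟩, hle⟩
    exact ⟨i, hi, Finsupp.single_le_iff.mp hle⟩
  · rintro ⟨i, hi, hle⟩
    exact ⟨Finsupp.single i (b i), ⟨i, hi, rfl⟩, Finsupp.single_le_iff.mpr hle⟩

lemma monomial_mem_mono {J : Ideal (MvPolynomial (Fin n) k)} {v u : Fin n →₀ ℕ}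
    (h : v ≤ u) (hv : monomial v (1 : k) ∈ J) : monomial u (1 : k) ∈ J := by
  have he : monomial u (1 : k) = monomial (u - v) (1 : k) * monomial v (1 : k) := by
    rw [monomial_mul, one_mul, tsub_add_cancel_of_le h]
  rw [he]
  exact Ideal.mul_mem_left _ _ hv

lemma expDeg_lt {v u : Fin n →₀ ℕ} (h : v ≤ u) (hne : v ≠ u) : expDeg v < expDeg u := by
  have h1 : ∀ w : Fin n →₀ ℕ, expDeg w = ∑ i : Fin n, w i := fun w =>
    Finsupp.sum_fintype _ _ (fun _ => rfl)
  rw [h1, h1]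
  obtain ⟨i, hi⟩ : ∃ i, v i < u i := by
    by_contra hc
    push_neg at hc
    exact hne (le_antisymm h (Finsupp.le_def.mpr hc))
  exact Finset.sum_lt_sum (fun i _ => Finsupp.le_def.mp h i) ⟨i, Finset.mem_univ i, hi⟩

lemma exists_minGens_le (J : Ideal (MvPolynomial (Fin n) k)) :
    ∀ (d : ℕ) (w : Fin n →₀ ℕ), expDeg w ≤ d → monomial w (1 : k) ∈ J →
      ∃ v ∈ minGens J, v ≤ w := by
  intro d
  induction d with
  | zero =>
    intro w hw hmem
    refine ⟨w, ⟨hmem, fun v hv hle => ?_⟩, le_rfl⟩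
    by_contra hne
    have := expDeg_lt hle hne
    omega
  | succ d ih =>
    intro w hw hmem
    by_cases hmin : ∀ v : Fin n →₀ ℕ, monomial v (1 : k) ∈ J → v ≤ w → v = w
    · exact ⟨w, ⟨hmem, hmin⟩, le_rfl⟩
    · push_neg at hmin
      obtain ⟨v, hv, hle, hne⟩ := hmin
      have hd : expDeg v ≤ d := by
        have := expDeg_lt hle hne
        omega
      obtain ⟨m, hm, hmv⟩ := ih v hd hv
      exact ⟨m, hm, hmv.trans hle⟩

lemma colon_pow_le {I : Ideal (MvPolynomial (Fin n) k)} {x : MvPolynomial (Fin n) k}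
    {s t : ℕ} (h : s ≤ t) :
    Submodule.colon I ((Ideal.span {x} ^ s : Ideal (MvPolynomial (Fin n) k)) : Set (MvPolynomial (Fin n) k)) ≤
      Submodule.colon I ((Ideal.span {x} ^ t : Ideal (MvPolynomial (Fin n) k)) : Set (MvPolynomial (Fin n) k)) := by
  intro g hg
  rw [Ideal.span_singleton_pow, Ideal.mem_colon_span_singleton] at hg ⊢
  rw [← Nat.add_sub_cancel' h, pow_add, ← mul_assoc]
  exact Ideal.mul_mem_right _ _ hg

lemma mem_infColon_singleton {I : Ideal (MvPolynomial (Fin n) k)}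
    {x f : MvPolynomial (Fin n) k} :
    f ∈ infColon I (Ideal.span {x}) ↔ ∃ t : ℕ, f * x ^ t ∈ I := by
  unfold infColon
  rw [Submodule.mem_iSup_of_directed _
    (fun s t => ⟨max s t, colon_pow_le (le_max_left s t), colon_pow_le (le_max_right s t)⟩)]
  constructor
  · rintro ⟨t, ht⟩
    rw [Ideal.span_singleton_pow, Ideal.mem_colon_span_singleton] at ht
    exact ⟨t, ht⟩
  · rintro ⟨t, ht⟩
    exact ⟨t, by rw [Ideal.span_singleton_pow, Ideal.mem_colon_span_singleton]; exact ht⟩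

lemma infColon_top {x : MvPolynomial (Fin n) k} :
    infColon (⊤ : Ideal (MvPolynomial (Fin n) k)) (Ideal.span {x}) = ⊤ :=
  eq_top_iff.mpr fun f _ => mem_infColon_singleton.mpr ⟨0, Submodule.mem_top⟩

lemma mem_biInf {C : Finset (Fin n →₀ ℕ)} {J : (Fin n →₀ ℕ) → Ideal (MvPolynomial (Fin n) k)}
    {f : MvPolynomial (Fin n) k} :
    f ∈ (⨅ b ∈ C, J b) ↔ ∀ b ∈ C, f ∈ J b := by
  simp only [Submodule.mem_iInf]

lemma mem_iInf_guard {C : Finset (Fin n →₀ ℕ)} {P : (Fin n →₀ ℕ) → Prop}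
    {J : (Fin n →₀ ℕ) → Ideal (MvPolynomial (Fin n) k)} {f : MvPolynomial (Fin n) k} :
    f ∈ (⨅ b ∈ C, ⨅ (_ : P b), J b) ↔ ∀ b ∈ C, P b → f ∈ J b := by
  simp only [Submodule.mem_iInf]

lemma mul_pow_mem_of_le {I : Ideal (MvPolynomial (Fin n) k)} {f x : MvPolynomial (Fin n) k}
    {s t : ℕ} (h : s ≤ t) (hf : f * x ^ s ∈ I) : f * x ^ t ∈ I := by
  rw [← Nat.add_sub_cancel' h, pow_add, ← mul_assoc]
  exact Ideal.mul_mem_right _ _ hf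

lemma infColon_mono {I I' : Ideal (MvPolynomial (Fin n) k)} {x : MvPolynomial (Fin n) k}
    (h : I ≤ I') : infColon I (Ideal.span {x}) ≤ infColon I' (Ideal.span {x}) := by
  intro f hf
  obtain ⟨t, ht⟩ := mem_infColon_singleton.mp hf
  exact mem_infColon_singleton.mpr ⟨t, h ht⟩

lemma mem_infColon_biInf {C : Finset (Fin n →₀ ℕ)}
    {J : (Fin n →₀ ℕ) → Ideal (MvPolynomial (Fin n) k)} {x f : MvPolynomial (Fin n) k} :
    f ∈ infColon (⨅ b ∈ C, J b) (Ideal.span {x}) ↔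
      ∀ b ∈ C, f ∈ infColon (J b) (Ideal.span {x}) := by
  classical
  induction C using Finset.induction_on with
  | empty =>
    constructor
    · intro _ b hb
      exact absurd hb (Finset.notMem_empty b)
    · intro _
      have h1 : (⨅ b ∈ (∅ : Finset (Fin n →₀ ℕ)), J b) = ⊤ := by simp
      rw [h1, infColon_top]
      exact Submodule.mem_top
  | @insert a s ha ih =>
    rw [Finset.iInf_insert]
    constructor
    · intro hf b hb
      rcases Finset.mem_insert.mp hb with rfl | hb'
      · exact infColon_mono inf_le_left hf
      · exact ih.mp (infColon_mono inf_le_right hf) b hb'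
    · intro hf
      obtain ⟨t₁, h1⟩ := mem_infColon_singleton.mp (hf a (Finset.mem_insert_self a s))
      obtain ⟨t₂, h2⟩ := mem_infColon_singleton.mp
        (ih.mpr fun b hb => hf b (Finset.mem_insert_of_mem hb))
      refine mem_infColon_singleton.mpr ⟨max t₁ t₂, Submodule.mem_inf.mpr ⟨?_, ?_⟩⟩
      · exact mul_pow_mem_of_le (le_max_left t₁ t₂) h1
      · exact mul_pow_mem_of_le (le_max_right t₁ t₂) h2

lemma coeff_mul_X_pow' (m : Fin n →₀ ℕ) (s : Fin n) (p : MvPolynomial (Fin n) k) (t : ℕ) :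
    coeff (m + Finsupp.single s t) (p * X s ^ t) = coeff m p := by
  induction t with
  | zero => simp
  | succ t ih =>
    have he : m + Finsupp.single s (t + 1) = (m + Finsupp.single s t) + Finsupp.single s 1 := by
      rw [add_assoc, ← Finsupp.single_add]
    rw [he, pow_succ, ← mul_assoc, coeff_mul_X, ih]

lemma infColon_irredPow_of_pos {b : Fin n →₀ ℕ} {j : Fin n} (h : 1 ≤ b j) :
    infColon (irredPow k b) (Ideal.span {(X j : MvPolynomial (Fin n) k)}) = ⊤ := by
  rw [eq_top_iff]
  intro f _
  refine mem_infColon_singleton.mpr ⟨b j, Ideal.mul_mem_left _ _ ?_⟩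
  unfold irredPow
  exact Ideal.subset_span ⟨j, h, rfl⟩

lemma infColon_irredPow_of_zero {b : Fin n →₀ ℕ} {j : Fin n} (h : b j = 0) :
    infColon (irredPow k b) (Ideal.span {(X j : MvPolynomial (Fin n) k)}) = irredPow k b := by
  refine le_antisymm ?_ ?_
  · intro f hf
    obtain ⟨t, ht⟩ := mem_infColon_singleton.mp hf
    rw [mem_irredPow] at ht ⊢
    intro u hu
    have hu' : u + Finsupp.single j t ∈ (f * X j ^ t).support := by
      rw [MvPolynomial.mem_support_iff, coeff_mul_X_pow']
      exact MvPolynomial.mem_support_iff.mp hu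
    obtain ⟨i, hbi, hle⟩ := ht _ hu'
    have hij : i ≠ j := by
      rintro rfl
      omega
    refine ⟨i, hbi, ?_⟩
    classical
    simpa [Finsupp.add_apply, Finsupp.single_apply, (Ne.symm hij)] using hle
  · intro f hf
    exact mem_infColon_singleton.mpr ⟨0, by simpa using hf⟩

lemma suppBound (C : Finset (Fin n →₀ ℕ)) (J : Ideal (MvPolynomial (Fin n) k))
    (hJ : J = ⨅ b ∈ C, irredPow k b)
    (hirr : ∀ b ∈ C, (⨅ b' ∈ C.erase b, irredPow k b') ≠ J)
    (m : Fin n) (hgen : ∀ u ∈ minGens J, ∀ i ∈ u.support, i ≤ m) :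
    ∀ b ∈ C, ∀ j ∈ b.support, j ≤ m := by
  classical
  intro b hb j hj
  by_contra hjm
  push_neg at hjm
  have hbj : 1 ≤ b j := Nat.one_le_iff_ne_zero.mpr (Finsupp.mem_support_iff.mp hj)
  have hle : J ≤ ⨅ b' ∈ C.erase b, irredPow k b' := by
    rw [hJ]
    intro f hf
    rw [mem_biInf] at hf ⊢
    exact fun b' hb' => hf b' (Finset.mem_of_mem_erase hb')
  obtain ⟨f, hf1, hf2⟩ : ∃ f, f ∈ (⨅ b' ∈ C.erase b, irredPow k b') ∧ f ∉ J := by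
    by_contra hc
    push_neg at hc
    exact hirr b hb (le_antisymm hc hle)
  have hfb : f ∉ irredPow k b := by
    intro hfb
    apply hf2
    rw [hJ, mem_biInf]
    intro b' hb'
    by_cases hbb : b' = b
    · exact hbb ▸ hfb
    · exact mem_biInf.mp hf1 b' (Finset.mem_erase.mpr ⟨hbb, hb'⟩)
  rw [mem_irredPow] at hfb
  push_neg at hfb
  obtain ⟨u, hu, hbu⟩ := hfb
  have humem : ∀ b' ∈ C.erase b, ∃ i, 1 ≤ b' i ∧ b' i ≤ u i := by
    intro b' hb'
    exact mem_irredPow.mp (mem_biInf.mp hf1 b' hb') u hu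
  set w := u + Finsupp.single j (b j) with hw
  have hwj : b j ≤ w j := by
    rw [hw, Finsupp.add_apply, Finsupp.single_apply, if_pos rfl]
    exact Nat.le_add_left _ _
  have hwu : u ≤ w := Finsupp.le_def.mpr fun i => by
    rw [hw, Finsupp.add_apply]; exact Nat.le_add_right _ _
  have hwmem : monomial w (1 : k) ∈ J := by
    rw [hJ, mem_biInf]
    intro b' hb'
    by_cases hbb : b' = b
    · subst hbb
      exact monomial_mem_irredPow.mpr ⟨j, hbj, hwj⟩
    · obtain ⟨i, h1, h2⟩ := humem b' (Finset.mem_erase.mpr ⟨hbb, hb'⟩)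
      exact monomial_mem_irredPow.mpr ⟨i, h1, h2.trans (Finsupp.le_def.mp hwu i)⟩
  obtain ⟨v, hvmin, hvw⟩ := exists_minGens_le J (expDeg w) w le_rfl hwmem
  have hvj : v j = 0 := by
    by_contra hvj
    exact absurd (hgen v hvmin j (Finsupp.mem_support_iff.mpr hvj)) (not_le.mpr hjm)
  have hvu : v ≤ u := by
    rw [Finsupp.le_def]
    intro i
    by_cases hij : i = j
    · subst hij; rw [hvj]; exact Nat.zero_le _
    · have h3 := Finsupp.le_def.mp hvw i
      rw [hw, Finsupp.add_apply, Finsupp.single_apply, if_neg (Ne.symm hij),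
        Nat.add_zero] at h3
      exact h3
  have humemJ : monomial u (1 : k) ∈ J := monomial_mem_mono hvu hvmin.1
  have humb : monomial u (1 : k) ∈ irredPow k b := by
    rw [hJ, mem_biInf] at humemJ
    exact humemJ b hb
  obtain ⟨i, h1, h2⟩ := monomial_mem_irredPow.mp humb
  exact absurd h2 (not_le.mpr (hbu i h1))

lemma minGen_supp (C : Finset (Fin n →₀ ℕ)) (J : Ideal (MvPolynomial (Fin n) k))
    (hJ : J = ⨅ b ∈ C, irredPow k b) (u : Fin n →₀ ℕ) (hu : u ∈ minGens J)
    (j : Fin n) (hj : j ∈ u.support) : ∃ b ∈ C, j ∈ b.support := by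
  classical
  by_contra hc
  push_neg at hc
  have hbz : ∀ b ∈ C, b j = 0 := fun b hb => by
    have h1 := hc b hb
    rwa [Finsupp.mem_support_iff, not_not] at h1
  set u' := u - Finsupp.single j (u j) with hu'
  have hmem : monomial u' (1 : k) ∈ J := by
    rw [hJ, mem_biInf]
    intro b hb
    have h1 : monomial u (1 : k) ∈ irredPow k b := by
      have h2 := hu.1
      rw [hJ, mem_biInf] at h2
      exact h2 b hb
    obtain ⟨i, hbi, hui⟩ := monomial_mem_irredPow.mp h1
    have hij : i ≠ j := by
      intro he
      rw [he, hbz b hb] at hbi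
      omega
    refine monomial_mem_irredPow.mpr ⟨i, hbi, ?_⟩
    rw [hu', Finsupp.tsub_apply, Finsupp.single_apply, if_neg (Ne.symm hij), Nat.sub_zero]
    exact hui
  have heq := hu.2 u' hmem tsub_le_self
  have h3 : u' j = u j := by rw [heq]
  rw [hu', Finsupp.tsub_apply, Finsupp.single_apply, if_pos rfl] at h3
  have huj := Finsupp.mem_support_iff.mp hj
  omega

end SeqChainAux


/-- Each term of the sequential chain of a Borel type ideal is the
intersection of those irreducible components supported in the first `n_l` variables. -/
theorem sequential_chain_eq_partial_intersection
    {k : Type} [Field k] {n : ℕ} (I : Ideal (MvPolynomial (Fin n) k))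
    (hI : IsMonomialIdeal I) (hB : IsBorelType I)
    (B : Finset (Fin n →₀ ℕ))
    (hdec : I = ⨅ b ∈ B, irredPow k b)
    (hirr : ∀ b ∈ B, (⨅ b' ∈ B.erase b, irredPow k b') ≠ I)
    (r : ℕ) (c : ℕ → Ideal (MvPolynomial (Fin n) k)) (nl : ℕ → Fin n)
    (h0 : c 0 = I) (hr : c r = ⊤) (hproper : ∀ l, l < r → c l ≠ ⊤)
    (hnl : ∀ l, l < r →
      (∀ u ∈ minGens (c l), ∀ i ∈ u.support, i ≤ nl l) ∧
      (∃ u ∈ minGens (c l), nl l ∈ u.support))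
    (hstep : ∀ l, l < r → c (l + 1) = infColon (c l) (Ideal.span {(X (nl l) : MvPolynomial (Fin n) k)})) :
    ∀ l, 1 ≤ l → l < r →
      c l = ⨅ b ∈ B, ⨅ (_ : ∀ i ∈ b.support, i ≤ nl l), irredPow k b := by
  classical
  suffices H : ∀ l, l < r →
      c l = ⨅ b ∈ B, ⨅ (_ : ∀ i ∈ b.support, i ≤ nl l), irredPow k b by
    intro l _ hl
    exact H l hl
  intro l
  induction l with
  | zero =>
    intro h0r
    have hJ0 : c 0 = ⨅ b ∈ B, irredPow k b := h0.trans hdec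
    have hirr0 : ∀ b ∈ B, (⨅ b' ∈ B.erase b, irredPow k b') ≠ c 0 := by
      intro b hb
      rw [h0]
      exact hirr b hb
    have hB0 : ∀ b ∈ B, ∀ i ∈ b.support, i ≤ nl 0 :=
      SeqChainAux.suppBound B (c 0) hJ0 hirr0 (nl 0) ((hnl 0 h0r).1)
    ext f
    rw [SeqChainAux.mem_iInf_guard]
    constructor
    · intro hf b hb _
      rw [hJ0, SeqChainAux.mem_biInf] at hf
      exact hf b hb
    · intro hf
      rw [hJ0, SeqChainAux.mem_biInf]
      exact fun b hb => hf b hb (hB0 b hb)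
  | succ l ih =>
    intro hl1
    have hl : l < r := Nat.lt_of_succ_lt hl1
    have hcl := ih hl
    have hQchar : ∀ f, f ∈ c (l + 1) ↔
        ∀ b ∈ B, (∀ i ∈ b.support, i < nl l) → f ∈ irredPow k b := by
      intro f
      rw [hstep l hl, hcl, SeqChainAux.mem_infColon_biInf]
      constructor
      · intro hf b hb hQ
        have hP : ∀ i ∈ b.support, i ≤ nl l := fun i hi => (hQ i hi).le
        have hbz : b (nl l) = 0 := by
          by_contra hz
          exact absurd (hQ (nl l) (Finsupp.mem_support_iff.mpr hz)) (lt_irrefl _)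
        have h2 := hf b hb
        rw [iInf_pos hP, SeqChainAux.infColon_irredPow_of_zero hbz] at h2
        exact h2
      · intro hf b hb
        by_cases hP : ∀ i ∈ b.support, i ≤ nl l
        · rw [iInf_pos hP]
          by_cases hz : b (nl l) = 0
          · rw [SeqChainAux.infColon_irredPow_of_zero hz]
            refine hf b hb fun i hi => lt_of_le_of_ne (hP i hi) ?_
            intro he
            exact (Finsupp.mem_support_iff.mp hi) (by rw [he]; exact hz)
          · rw [SeqChainAux.infColon_irredPow_of_pos (Nat.one_le_iff_ne_zero.mpr hz)]
            exact Submodule.mem_top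
        · rw [iInf_neg hP, SeqChainAux.infColon_top]
          exact Submodule.mem_top
    set C : Finset (Fin n →₀ ℕ) := B.filter (fun b => ∀ i ∈ b.support, i < nl l) with hCdef
    have hJC : c (l + 1) = ⨅ b ∈ C, irredPow k b := by
      ext f
      rw [hQchar f, SeqChainAux.mem_biInf]
      constructor
      · intro h b hb
        obtain ⟨hbB, hbQ⟩ := Finset.mem_filter.mp hb
        exact h b hbB hbQ
      · intro h b hb hq
        exact h b (Finset.mem_filter.mpr ⟨hb, hq⟩)
    have hirrC : ∀ b ∈ C, (⨅ b' ∈ C.erase b, irredPow k b') ≠ c (l + 1) := by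
      intro b hbC heq
      have hbB : b ∈ B := (Finset.mem_filter.mp hbC).1
      apply hirr b hbB
      rw [hdec]
      apply le_antisymm
      · intro f hf
        rw [SeqChainAux.mem_biInf] at hf ⊢
        intro b' hb'
        by_cases hbb : b' = b
        · subst hbb
          have hf2 : f ∈ c (l + 1) := by
            rw [← heq, SeqChainAux.mem_biInf]
            intro b'' hb''
            obtain ⟨hne, hb''C⟩ := Finset.mem_erase.mp hb''
            exact hf b'' (Finset.mem_erase.mpr ⟨hne, (Finset.mem_filter.mp hb''C).1⟩)
          rw [hJC, SeqChainAux.mem_biInf] at hf2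
          exact hf2 b' hbC
        · exact hf b' (Finset.mem_erase.mpr ⟨hbb, hb'⟩)
      · intro f hf
        rw [SeqChainAux.mem_biInf] at hf ⊢
        exact fun b' hb' => hf b' (Finset.mem_erase.mp hb').2
    have hCbound : ∀ b ∈ C, ∀ i ∈ b.support, i ≤ nl (l + 1) :=
      SeqChainAux.suppBound C (c (l + 1)) hJC hirrC (nl (l + 1)) ((hnl (l + 1) hl1).1)
    obtain ⟨u, huMin, huSupp⟩ := (hnl (l + 1) hl1).2
    obtain ⟨b0, hb0, hjb0⟩ :=
      SeqChainAux.minGen_supp C (c (l + 1)) hJC u huMin (nl (l + 1)) huSupp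
    have hlt : nl (l + 1) < nl l := (Finset.mem_filter.mp hb0).2 (nl (l + 1)) hjb0
    ext f
    rw [hQchar f, SeqChainAux.mem_iInf_guard]
    constructor
    · intro hf b hb hP
      exact hf b hb fun i hi => lt_of_le_of_lt (hP i hi) hlt
    · intro hf b hb hQb
      exact hf b hb (hCbound b (Finset.mem_filter.mpr ⟨hb, hQb⟩))


end
end

section
/- If K and L are monomial ideals of Borel type in S = k[x_1,...,x_n], then K ∩ L, K + L, and K·L are all monomial ideals of Borel type. -/
open MvPolynomial DirectSum

noncomputable section




variable {k : Type} [Field k] {n : ℕ}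

variable (M : Type) [AddCommGroup M] [Module (MvPolynomial (Fin n) k) M]

variable (dg : ℤ → AddSubgroup M)

private lemma colon_pow_monotone (I J : Ideal (MvPolynomial (Fin n) k)) :
    Monotone fun t : ℕ => Submodule.colon I ((J ^ t : Ideal (MvPolynomial (Fin n) k)) : Set (MvPolynomial (Fin n) k)) := by
  intro s t hst f hf
  rw [Submodule.mem_colon] at hf ⊢
  exact fun p hp => hf p (Ideal.pow_le_pow_right hst hp)

private lemma mem_infColon {I J : Ideal (MvPolynomial (Fin n) k)}
    {f : MvPolynomial (Fin n) k} :
    f ∈ infColon I J ↔ ∃ t, f ∈ Submodule.colon I ((J ^ t : Ideal (MvPolynomial (Fin n) k)) : Set (MvPolynomial (Fin n) k)) :=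
  Submodule.mem_iSup_of_directed _ (colon_pow_monotone I J).directed_le

private lemma mem_infColon_singleton {I : Ideal (MvPolynomial (Fin n) k)}
    {g f : MvPolynomial (Fin n) k} :
    f ∈ infColon I (Ideal.span {g}) ↔ ∃ t, g ^ t * f ∈ I := by
  rw [mem_infColon]
  refine exists_congr fun t => ?_
  rw [Ideal.span_singleton_pow]
  constructor
  · intro h
    have := Submodule.mem_colon.1 h (g ^ t) (Ideal.mem_span_singleton_self _)
    rwa [smul_eq_mul, mul_comm] at this
  · intro h
    rw [Submodule.mem_colon]
    intro p hp
    obtain ⟨c, rfl⟩ := Ideal.mem_span_singleton'.1 hp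
    have : f • (c * g ^ t) = c * (g ^ t * f) := by rw [smul_eq_mul]; ring
    rw [this]
    exact Ideal.mul_mem_left _ _ h

private lemma infColon_mono_left {K K' : Ideal (MvPolynomial (Fin n) k)}
    (h : K ≤ K') (J : Ideal (MvPolynomial (Fin n) k)) :
    infColon K J ≤ infColon K' J := by
  refine iSup_mono fun t f hf => ?_
  rw [Submodule.mem_colon] at hf ⊢
  exact fun p hp => h (hf p hp)

private lemma infColon_anti (I : Ideal (MvPolynomial (Fin n) k))
    {J J' : Ideal (MvPolynomial (Fin n) k)} (h : J ≤ J') :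
    infColon I J' ≤ infColon I J := by
  refine iSup_mono fun t f hf => ?_
  rw [Submodule.mem_colon] at hf ⊢
  exact fun p hp => hf p (Ideal.pow_right_mono h t hp)

private lemma span_X_le_Q (i : Fin n) :
    Ideal.span {(X i : MvPolynomial (Fin n) k)}
      ≤ Ideal.span {f : MvPolynomial (Fin n) k | ∃ j ≤ i, f = X j} := by
  rw [Ideal.span_le, Set.singleton_subset_iff]
  exact Ideal.subset_span ⟨i, le_refl i, rfl⟩

private lemma isBorelType_of {I : Ideal (MvPolynomial (Fin n) k)}
    (h : ∀ i : Fin n, infColon I (Ideal.span {X i})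
      ≤ infColon I (Ideal.span {f : MvPolynomial (Fin n) k | ∃ j ≤ i, f = X j})) :
    IsBorelType I :=
  fun i => le_antisymm (infColon_anti I (span_X_le_Q i)) (h i)

private lemma monomial_mem_span {A : Set (Fin n →₀ ℕ)} {a u : Fin n →₀ ℕ}
    (ha : a ∈ A) (hau : a ≤ u) (c : k) :
    monomial u c ∈ Ideal.span ((fun v => monomial v (1 : k)) '' A) := by
  have h : monomial u c = monomial (u - a) c * monomial a (1 : k) := by
    rw [monomial_mul, mul_one, tsub_add_cancel_of_le hau]
  rw [h]
  exact Ideal.mul_mem_left _ _ (Ideal.subset_span ⟨a, ha, rfl⟩)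

open Pointwise in
private lemma image_mul_image (A B : Set (Fin n →₀ ℕ)) :
    ((fun v => monomial v (1 : k)) '' A) * ((fun v => monomial v (1 : k)) '' B)
      = (fun v => monomial v (1 : k)) '' Set.image2 (· + ·) A B := by
  ext x
  constructor
  · rintro ⟨-, ⟨a, ha, rfl⟩, -, ⟨b, hb, rfl⟩, rfl⟩
    exact ⟨a + b, Set.mem_image2_of_mem ha hb, by simp [monomial_mul]⟩
  · rintro ⟨-, ⟨a, ha, b, hb, rfl⟩, rfl⟩
    exact ⟨monomial a 1, ⟨a, ha, rfl⟩, monomial b 1, ⟨b, hb, rfl⟩,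
      by simp [monomial_mul]⟩

private lemma infColon_mul_le (K L J : Ideal (MvPolynomial (Fin n) k)) :
    infColon K J * infColon L J ≤ infColon (K * L) J := by
  rw [Ideal.mul_le]
  intro a ha b hb
  obtain ⟨s, hs⟩ := mem_infColon.1 ha
  obtain ⟨r, hr⟩ := mem_infColon.1 hb
  refine mem_infColon.2 ⟨s + r, ?_⟩
  rw [Submodule.mem_colon]
  intro p hp
  rw [pow_add] at hp
  refine Submodule.mul_induction_on hp (fun g hg h hh => ?_) (fun x y hx hy => ?_)
  · have h1 : a * g ∈ K := Submodule.mem_colon.1 hs g hg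
    have h2 : b * h ∈ L := Submodule.mem_colon.1 hr h hh
    have heq : (a * b) • (g * h) = (a * g) * (b * h) := by
      rw [smul_eq_mul]; ring
    rw [heq]
    exact Ideal.mul_mem_mul h1 h2
  · have heq : (a * b) • (x + y) = (a * b) • x + (a * b) • y := smul_add _ x y
    rw [heq]
    exact Ideal.add_mem _ hx hy



private lemma inf_rep {K L : Ideal (MvPolynomial (Fin n) k)} {A B : Set (Fin n →₀ ℕ)}
    (hK : K = Ideal.span ((fun u => monomial u (1 : k)) '' A))
    (hL : L = Ideal.span ((fun u => monomial u (1 : k)) '' B)) :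
    K ⊓ L = Ideal.span ((fun u => monomial u (1 : k)) '' Set.image2 (· ⊔ ·) A B) := by
  ext f
  rw [Submodule.mem_inf, hK, hL, mem_ideal_span_monomial_image,
    mem_ideal_span_monomial_image, mem_ideal_span_monomial_image]
  constructor
  · rintro ⟨h1, h2⟩ m hm
    obtain ⟨a, ha, ham⟩ := h1 m hm
    obtain ⟨b, hb, hbm⟩ := h2 m hm
    exact ⟨a ⊔ b, Set.mem_image2_of_mem ha hb, sup_le ham hbm⟩
  · intro h
    constructor
    · intro m hm
      obtain ⟨c, hc, hcm⟩ := h m hm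
      obtain ⟨a, ha, b, hb, rfl⟩ := hc
      exact ⟨a, ha, le_trans le_sup_left hcm⟩
    · intro m hm
      obtain ⟨c, hc, hcm⟩ := h m hm
      obtain ⟨a, ha, b, hb, rfl⟩ := hc
      exact ⟨b, hb, le_trans le_sup_right hcm⟩

private lemma monomial_mem_infColon_X {I : Ideal (MvPolynomial (Fin n) k)}
    {A : Set (Fin n →₀ ℕ)} (i : Fin n) (t : ℕ)
    (hI : I = Ideal.span ((fun u => monomial u (1 : k)) '' A))
    {a u : Fin n →₀ ℕ} (ha : a ∈ A) (h : a ≤ u + Finsupp.single i t)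
    (c : k) : monomial u c ∈ infColon I (Ideal.span {X i}) := by
  refine mem_infColon_singleton.2 ⟨t, ?_⟩
  have heq : (X i : MvPolynomial (Fin n) k) ^ t * monomial u c
      = monomial (u + Finsupp.single i t) c := by
    rw [X_pow_eq_monomial, monomial_mul, one_mul, add_comm]
  rw [heq, hI]
  exact monomial_mem_span ha h c

private lemma shifted_support_mem {f : MvPolynomial (Fin n) k} {i : Fin n} {t : ℕ}
    {m : Fin n →₀ ℕ} (hm : m ∈ f.support) :
    m + Finsupp.single i t ∈ ((X i : MvPolynomial (Fin n) k) ^ t * f).support := by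
  rw [mem_support_iff, mul_comm, X_pow_eq_monomial, coeff_mul_monomial, mul_one]
  exact mem_support_iff.1 hm

private lemma sup_borel_aux {K L : Ideal (MvPolynomial (Fin n) k)} {A B : Set (Fin n →₀ ℕ)}
    (hK : K = Ideal.span ((fun u => monomial u (1 : k)) '' A))
    (hL : L = Ideal.span ((fun u => monomial u (1 : k)) '' B)) (i : Fin n) :
    infColon (K ⊔ L) (Ideal.span {X i})
      ≤ infColon K (Ideal.span {X i}) ⊔ infColon L (Ideal.span {X i}) := by
  intro f hf
  obtain ⟨t, hft⟩ := mem_infColon_singleton.1 hf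
  have hrep : K ⊔ L = Ideal.span ((fun u => monomial u (1 : k)) '' (A ∪ B)) := by
    rw [hK, hL, Set.image_union, Ideal.span_union]
  rw [hrep, mem_ideal_span_monomial_image] at hft
  rw [← support_sum_monomial_coeff f]
  refine Submodule.sum_mem _ fun m hm => ?_
  obtain ⟨c, hc, hcm⟩ := hft _ (shifted_support_mem hm)
  rcases hc with hcA | hcB
  · exact Submodule.mem_sup_left (monomial_mem_infColon_X i t hK hcA hcm _)
  · exact Submodule.mem_sup_right (monomial_mem_infColon_X i t hL hcB hcm _)

private lemma mul_borel_aux {K L : Ideal (MvPolynomial (Fin n) k)} {A B : Set (Fin n →₀ ℕ)}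
    (hK : K = Ideal.span ((fun u => monomial u (1 : k)) '' A))
    (hL : L = Ideal.span ((fun u => monomial u (1 : k)) '' B)) (i : Fin n) :
    infColon (K * L) (Ideal.span {X i})
      ≤ infColon K (Ideal.span {X i}) * infColon L (Ideal.span {X i}) := by
  intro f hf
  obtain ⟨t, hft⟩ := mem_infColon_singleton.1 hf
  have hrep : K * L = Ideal.span ((fun u => monomial u (1 : k)) '' Set.image2 (· + ·) A B) := by
    rw [hK, hL, Ideal.span_mul_span', image_mul_image]
  rw [hrep, mem_ideal_span_monomial_image] at hft
  rw [← support_sum_monomial_coeff f]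
  refine Submodule.sum_mem _ fun m hm => ?_
  obtain ⟨c, hc, hcm⟩ := hft _ (shifted_support_mem hm)
  obtain ⟨a, ha, b, hb, rfl⟩ := hc
  have hcm' : ∀ j, a j + b j ≤ m j + (Finsupp.single i t) j := by
    intro j
    have := Finsupp.le_def.1 hcm j
    rwa [Finsupp.add_apply, Finsupp.add_apply] at this
  have h1 : min (a i) t ≤ a i := min_le_left _ _
  have h2 : min (a i) t ≤ t := min_le_right _ _
  have h3 : min (a i) t = a i ∨ min (a i) t = t := min_choice _ _
  set a' := a - Finsupp.single i (min (a i) t) with ha'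
  set b' := b - Finsupp.single i (t - min (a i) t) with hb'
  have haK : monomial a' (1 : k) ∈ infColon K (Ideal.span {X i}) := by
    refine monomial_mem_infColon_X i t hK ha ?_ _
    rw [Finsupp.le_def]
    intro j
    rw [Finsupp.add_apply, ha', Finsupp.tsub_apply]
    rcases eq_or_ne i j with rfl | hij
    · rw [Finsupp.single_eq_same, Finsupp.single_eq_same]
      omega
    · rw [Finsupp.single_eq_of_ne' hij, Finsupp.single_eq_of_ne' hij]
      omega
  have hbL : monomial b' (1 : k) ∈ infColon L (Ideal.span {X i}) := by
    refine monomial_mem_infColon_X i t hL hb ?_ _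
    rw [Finsupp.le_def]
    intro j
    rw [Finsupp.add_apply, hb', Finsupp.tsub_apply]
    rcases eq_or_ne i j with rfl | hij
    · rw [Finsupp.single_eq_same, Finsupp.single_eq_same]
      omega
    · rw [Finsupp.single_eq_of_ne' hij, Finsupp.single_eq_of_ne' hij]
      omega
  have habm : a' + b' ≤ m := by
    rw [Finsupp.le_def]
    intro j
    have hj := hcm' j
    rw [Finsupp.add_apply, ha', hb', Finsupp.tsub_apply, Finsupp.tsub_apply]
    rcases eq_or_ne i j with rfl | hij
    · rw [Finsupp.single_eq_same] at hj ⊢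
      rw [Finsupp.single_eq_same]
      omega
    · rw [Finsupp.single_eq_of_ne' hij] at hj ⊢
      rw [Finsupp.single_eq_of_ne' hij]
      omega
  have heq : monomial m (coeff m f)
      = monomial (m - (a' + b')) (coeff m f) * (monomial a' (1 : k) * monomial b' (1 : k)) := by
    rw [monomial_mul, monomial_mul, mul_one, mul_one, tsub_add_cancel_of_le habm]
  rw [heq]
  exact Ideal.mul_mem_left _ _ (Ideal.mul_mem_mul haK hbL)


/-- The intersection, sum and product of two Borel type monomial
ideals are again Borel type monomial ideals. -/
theorem borelType_inf_sup_mul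
    {k : Type} [Field k] {n : ℕ} (K L : Ideal (MvPolynomial (Fin n) k))
    (hKm : IsMonomialIdeal K) (hKb : IsBorelType K)
    (hLm : IsMonomialIdeal L) (hLb : IsBorelType L) :
    (IsMonomialIdeal (K ⊓ L) ∧ IsBorelType (K ⊓ L)) ∧
    (IsMonomialIdeal (K ⊔ L) ∧ IsBorelType (K ⊔ L)) ∧
    (IsMonomialIdeal (K * L) ∧ IsBorelType (K * L)) := by
  obtain ⟨A, hK⟩ := hKm
  obtain ⟨B, hL⟩ := hLm
  refine ⟨⟨⟨Set.image2 (· ⊔ ·) A B, inf_rep hK hL⟩, ?_⟩,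
    ⟨⟨A ∪ B, by rw [hK, hL, Set.image_union, Ideal.span_union]⟩, ?_⟩,
    ⟨⟨Set.image2 (· + ·) A B, by rw [hK, hL, Ideal.span_mul_span', image_mul_image]⟩, ?_⟩⟩
  · -- Borel type of the intersection
    refine isBorelType_of fun i => fun f hf => ?_
    have hfK : f ∈ infColon K (Ideal.span {X i}) := infColon_mono_left inf_le_left _ hf
    have hfL : f ∈ infColon L (Ideal.span {X i}) := infColon_mono_left inf_le_right _ hf
    rw [← hKb i] at hfK
    rw [← hLb i] at hfL
    obtain ⟨s, hs⟩ := mem_infColon.1 hfK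
    obtain ⟨r, hr⟩ := mem_infColon.1 hfL
    refine mem_infColon.2 ⟨max s r, ?_⟩
    rw [Submodule.mem_colon]
    intro p hp
    refine Submodule.mem_inf.2 ⟨?_, ?_⟩
    · exact Submodule.mem_colon.1 (colon_pow_monotone K _ (le_max_left s r) hs) p hp
    · exact Submodule.mem_colon.1 (colon_pow_monotone L _ (le_max_right s r) hr) p hp
  · -- Borel type of the sum
    refine isBorelType_of fun i => ?_
    calc infColon (K ⊔ L) (Ideal.span {X i})
        ≤ infColon K (Ideal.span {X i}) ⊔ infColon L (Ideal.span {X i}) :=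
          sup_borel_aux hK hL i
      _ = infColon K (Ideal.span {f : MvPolynomial (Fin n) k | ∃ j ≤ i, f = X j})
            ⊔ infColon L (Ideal.span {f : MvPolynomial (Fin n) k | ∃ j ≤ i, f = X j}) := by
          rw [hKb i, hLb i]
      _ ≤ infColon (K ⊔ L) (Ideal.span {f : MvPolynomial (Fin n) k | ∃ j ≤ i, f = X j}) :=
          sup_le (infColon_mono_left le_sup_left _) (infColon_mono_left le_sup_right _)
  · -- Borel type of the product
    refine isBorelType_of fun i => ?_
    calc infColon (K * L) (Ideal.span {X i})
        ≤ infColon K (Ideal.span {X i}) * infColon L (Ideal.span {X i}) :=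
          mul_borel_aux hK hL i
      _ = infColon K (Ideal.span {f : MvPolynomial (Fin n) k | ∃ j ≤ i, f = X j})
            * infColon L (Ideal.span {f : MvPolynomial (Fin n) k | ∃ j ≤ i, f = X j}) := by
          rw [hKb i, hLb i]
      _ ≤ infColon (K * L) (Ideal.span {f : MvPolynomial (Fin n) k | ∃ j ≤ i, f = X j}) :=
          infColon_mul_le K L _

end
end
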